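/- arXiv:2407.00103 — 8 statements merged into one kernel-verified Lean document; each statement's English description precedes it below -/
import Mathlib

section
/- If G is a finite connected simple graph with at least two vertices and D is a dominating set of G of minimum cardinality, then the complement V \ D is also a dominating set of G. -/
/-- `S` is a dominating set of `G`: every vertex outside `S` has a neighbor in `S`. -/
def IsDominating {V : Type*} (G : SimpleGraph V) (S : Set V) : Prop :=
  ∀ v, v ∉ S → ∃ u ∈ S, G.Adj v u

/-- A domatic partition of `G`: a partition of the vertex set into
(pairwise disjoint, nonempty) dominating sets. -/
def IsDomaticPartition {V : Type*} (G : SimpleGraph V) (P : Set (Set V)) : Prop :=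
  Setoid.IsPartition P ∧ ∀ S ∈ P, IsDominating G S

/-- `dp G i` is the number of domatic partitions of `G` with exactly `i` parts. -/
noncomputable def dp {V : Type*} (G : SimpleGraph V) (i : ℕ) : ℕ :=
  {P : Set (Set V) | IsDomaticPartition G P ∧ P.ncard = i}.ncard

/-- In a finite connected graph on at least two vertices, the complement of a
minimum dominating set is again a dominating set. -/
theorem compl_of_min_dominating_isDominating
    {V : Type*} [Fintype V] (G : SimpleGraph V) (hconn : G.Connected)
    (hcard : 1 < Fintype.card V) (D : Set V) (hD : IsDominating G D)
    (hmin : ∀ D' : Set V, IsDominating G D' → D.ncard ≤ D'.ncard) :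
    IsDominating G Dᶜ := by
  intro v hv
  rw [Set.notMem_compl_iff] at hv
  by_contra hno
  push_neg at hno
  -- all neighbors of v are in D
  have hnb : ∀ u, G.Adj v u → u ∈ D := fun u hu => by
    by_contra h; exact hno u h hu
  -- v has a neighbor
  obtain ⟨w, hw⟩ : ∃ w, G.Adj v w := by
    obtain ⟨x, y, hxy⟩ := Fintype.exists_pair_of_one_lt_card hcard
    rcases eq_or_ne x v with rfl | hx
    · obtain ⟨p⟩ := hconn x y
      cases p with
      | nil => exact absurd rfl hxy
      | cons h _ => exact ⟨_, h⟩
    · obtain ⟨p⟩ := hconn v x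
      cases p with
      | nil => exact absurd rfl hx.symm
      | cons h _ => exact ⟨_, h⟩
  -- D \ {v} is dominating
  have hdom : IsDominating G (D \ {v}) := by
    intro u hu
    rcases eq_or_ne u v with rfl | huv
    · exact ⟨w, ⟨hnb w hw, hw.ne'⟩, hw⟩
    · have hud : u ∉ D := fun h => hu ⟨h, huv⟩
      obtain ⟨z, hz, hadj⟩ := hD u hud
      refine ⟨z, ⟨hz, ?_⟩, hadj⟩
      rintro rfl
      exact hud (hnb u hadj.symm)
  have hlt : (D \ {v}).ncard < D.ncard :=
    Set.ncard_diff_singleton_lt_of_mem hv (Set.toFinite D)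
  exact absurd (hmin _ hdom) (not_le.mpr hlt)
end

section
/- Let T be a finite tree of order n ≥ 4 and let y be a quasi-star vertex of T, i.e., y is adjacent to exactly one non-leaf vertex and to at least one leaf. Let ones(y) be the set of leaves adjacent to y, let T₁ be the subgraph of T induced on V \ ones(y), and let T₂ be the subgraph of T induced on V \ (ones(y) ∪ {y}). Then dp(T,2) = dp(T₁,2) + dp(T₂,2). -/
lemma dp_two_eq_ncard {W : Type*} (H : SimpleGraph W) (z : W) :
    dp H 2 = {A : Set W | A.Nonempty ∧ z ∉ A ∧ IsDominating H A ∧ IsDominating H Aᶜ}.ncard := by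
  classical
  have himg : {P : Set (Set W) | IsDomaticPartition H P ∧ P.ncard = 2}
      = (fun A : Set W => ({A, Aᶜ} : Set (Set W))) ''
        {A : Set W | A.Nonempty ∧ z ∉ A ∧ IsDominating H A ∧ IsDominating H Aᶜ} := by
    ext P
    constructor
    · rintro ⟨⟨hpart, hdom⟩, hcard⟩
      obtain ⟨A, B, hAB, rfl⟩ := Set.ncard_eq_two.mp hcard
      have hBA : B = Aᶜ := by
        ext v
        constructor
        · intro hvB hvA
          obtain ⟨S, ⟨hSP, hvS⟩, huniq⟩ := hpart.2 v
          have h1 : A = S := huniq A ⟨Or.inl rfl, hvA⟩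
          have h2 : B = S := huniq B ⟨Or.inr rfl, hvB⟩
          exact hAB (h1.trans h2.symm)
        · intro hv
          obtain ⟨S, ⟨hSP, hvS⟩, _⟩ := hpart.2 v
          rcases hSP with rfl | rfl
          · exact absurd hvS hv
          · exact hvS
      subst hBA
      have hAne : A.Nonempty := by
        rcases Set.eq_empty_or_nonempty A with h | h
        · exact absurd (h ▸ Or.inl rfl : (∅ : Set W) ∈ ({A, Aᶜ} : Set (Set W))) hpart.1
        · exact h
      have hAcne : Aᶜ.Nonempty := by
        rcases Set.eq_empty_or_nonempty Aᶜ with h | h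
        · exact absurd (h ▸ Or.inr rfl : (∅ : Set W) ∈ ({A, Aᶜ} : Set (Set W))) hpart.1
        · exact h
      have hdA : IsDominating H A := hdom A (Or.inl rfl)
      have hdAc : IsDominating H Aᶜ := hdom Aᶜ (Or.inr rfl)
      by_cases hz : z ∈ A
      · refine ⟨Aᶜ, ⟨hAcne, fun h => h hz, hdAc, by simpa using hdA⟩, ?_⟩
        simp only [compl_compl]
        exact Set.pair_comm Aᶜ A
      · exact ⟨A, ⟨hAne, hz, hdA, hdAc⟩, rfl⟩
    · rintro ⟨A, ⟨hne, hz, hdA, hdAc⟩, rfl⟩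
      have hAAc : A ≠ Aᶜ := by
        intro h
        exact hz (h ▸ Set.mem_compl hz)
      refine ⟨⟨⟨?_, ?_⟩, ?_⟩, Set.ncard_pair hAAc⟩
      · rintro (h | h)
        · exact hne.ne_empty h.symm
        · exact (Set.nonempty_compl.mpr (fun hu => hz (by simp [hu]))).ne_empty h.symm
      · intro v
        by_cases hv : v ∈ A
        · refine ⟨A, ⟨Or.inl rfl, hv⟩, ?_⟩
          rintro S ⟨(rfl | rfl), hvS⟩
          · rfl
          · exact absurd hv hvS
        · refine ⟨Aᶜ, ⟨Or.inr rfl, hv⟩, ?_⟩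
          rintro S ⟨(rfl | rfl), hvS⟩
          · exact absurd hvS hv
          · rfl
      · rintro S (rfl | rfl)
        · exact hdA
        · exact hdAc
  have hinj : Set.InjOn (fun A : Set W => ({A, Aᶜ} : Set (Set W)))
      {A : Set W | A.Nonempty ∧ z ∉ A ∧ IsDominating H A ∧ IsDominating H Aᶜ} := by
    intro A hA B hB hEq
    have h' : ({A, Aᶜ} : Set (Set W)) = {B, Bᶜ} := hEq
    have : A ∈ ({B, Bᶜ} : Set (Set W)) := h' ▸ Or.inl rfl
    rcases this with h | h
    · exact h
    · exact absurd (Set.mem_compl hB.2.1) (h ▸ hA.2.1)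
  rw [dp, himg, Set.ncard_image_of_injOn hinj]

/-- Recurrence for the number of 2-part domatic partitions of a tree at a
quasi-star vertex `y` (a vertex adjacent to exactly one non-leaf and to at
least one leaf): `dp T 2 = dp T₁ 2 + dp T₂ 2`, where `T₁` is induced on
`V \ ones(y)` and `T₂` on `V \ (ones(y) ∪ {y})`. -/
theorem dp_two_quasi_star_recurrence
    {V : Type*} [Fintype V] (G : SimpleGraph V) [DecidableRel G.Adj]
    (hT : G.IsTree) (hn : 4 ≤ Fintype.card V) (y : V)
    (hquasi₁ : ∃! w, G.Adj y w ∧ G.degree w ≠ 1)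
    (hquasi₂ : ∃ u, G.Adj y u ∧ G.degree u = 1) :
    dp G 2 =
      dp (G.induce {v | ¬ (G.Adj y v ∧ G.degree v = 1)}) 2 +
        dp (G.induce {v | ¬ (G.Adj y v ∧ G.degree v = 1) ∧ v ≠ y}) 2 := by
  classical
  obtain ⟨w, ⟨hyw, hw1⟩, hwu⟩ := hquasi₁
  obtain ⟨l₀, hl₀adj, hl₀deg⟩ := hquasi₂
  set V₂ : Set V := {v | ¬ (G.Adj y v ∧ G.degree v = 1) ∧ v ≠ y} with hV₂def
  set V₁ : Set V := {v | ¬ (G.Adj y v ∧ G.degree v = 1)} with hV₁def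
  have hyV₁ : y ∈ V₁ := fun h => G.irrefl h.1
  have hwV₂ : w ∈ V₂ := ⟨fun h => hw1 h.2, hyw.ne'⟩
  have hwV₁ : w ∈ V₁ := hwV₂.1
  have memV₂ : ∀ v : V, v ∈ V₂ ↔ v ∈ V₁ ∧ v ≠ y := fun v => Iff.rfl
  have leaf_nb : ∀ v, v ∉ V₁ → ∀ u, G.Adj v u → u = y := by
    intro v hv u hu
    have hv' : G.Adj y v ∧ G.degree v = 1 := not_not.mp hv
    have h1 : y ∈ G.neighborFinset v := (SimpleGraph.mem_neighborFinset _ _ _).mpr hv'.1.symm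
    have h2 : u ∈ G.neighborFinset v := (SimpleGraph.mem_neighborFinset _ _ _).mpr hu
    exact Finset.card_le_one.mp (le_of_eq hv'.2) _ h2 _ h1
  have y_nb : ∀ u, G.Adj y u → u = w ∨ u ∉ V₁ := by
    intro u hu
    by_cases h : G.degree u = 1
    · exact Or.inr (not_not.mpr ⟨hu, h⟩)
    · exact Or.inl (hwu u ⟨hu, h⟩)
  have hl₀ : l₀ ∉ V₁ := not_not.mpr ⟨hl₀adj, hl₀deg⟩
  rw [dp_two_eq_ncard G y, dp_two_eq_ncard (G.induce V₁) ⟨y, hyV₁⟩,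
      dp_two_eq_ncard (G.induce V₂) ⟨w, hwV₂⟩]
  set D : Set (Set V) :=
    {A : Set V | A.Nonempty ∧ y ∉ A ∧ IsDominating G A ∧ IsDominating G Aᶜ} with hDdef
  have hLsub : ∀ A ∈ D, ∀ v, v ∉ V₁ → v ∈ A := by
    rintro A ⟨_, hyA, hdA, _⟩ v hv
    by_contra hvA
    obtain ⟨u, huA, hadj⟩ := hdA v hvA
    exact hyA (leaf_nb v hv u hadj ▸ huA)
  -- key₁ : the D₁ set is the image of partitions with w on the non-y side
  have key₁ :
      {A : Set ↥V₁ | A.Nonempty ∧ (⟨y, hyV₁⟩ : ↥V₁) ∉ A ∧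
        IsDominating (G.induce V₁) A ∧ IsDominating (G.induce V₁) Aᶜ}
      = (fun A : Set V => (Subtype.val ⁻¹' A : Set ↥V₁)) '' (D ∩ {A : Set V | w ∈ A}) := by
    ext A'
    constructor
    · rintro ⟨hne', hy', hd', hdc'⟩
      have hw' : (⟨w, hwV₁⟩ : ↥V₁) ∈ A' := by
        obtain ⟨u, hu, hadj⟩ := hd' ⟨y, hyV₁⟩ hy'
        have hadj' : G.Adj y ↑u := hadj
        rcases y_nb ↑u hadj' with h | h
        · exact (Subtype.ext h : u = ⟨w, hwV₁⟩) ▸ hu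
        · exact absurd u.2 h
      have hyA : y ∉ Subtype.val '' A' ∪ V₁ᶜ := by
        rintro (⟨u, huA', hval⟩ | h)
        · exact hy' ((Subtype.ext hval : u = ⟨y, hyV₁⟩) ▸ huA')
        · exact h hyV₁
      refine ⟨Subtype.val '' A' ∪ V₁ᶜ, ⟨⟨⟨l₀, Or.inr hl₀⟩, hyA, ?_, ?_⟩,
        Or.inl ⟨⟨w, hwV₁⟩, hw', rfl⟩⟩, ?_⟩
      · -- dominating
        intro v hvA
        have hvV₁ : v ∈ V₁ := not_not.mp (fun h => hvA (Or.inr h))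
        have hvA' : (⟨v, hvV₁⟩ : ↥V₁) ∉ A' := fun h => hvA (Or.inl ⟨_, h, rfl⟩)
        obtain ⟨u', hu', hadj⟩ := hd' ⟨v, hvV₁⟩ hvA'
        exact ⟨↑u', Or.inl ⟨u', hu', rfl⟩, hadj⟩
      · -- complement dominating
        intro v hv
        have hvA : v ∈ Subtype.val '' A' ∪ V₁ᶜ := not_not.mp hv
        rcases hvA with ⟨u, huA', rfl⟩ | h
        · obtain ⟨u', hu'c, hadj⟩ := hdc' u (not_not.mpr huA')
          refine ⟨↑u', ?_, hadj⟩
          rintro (⟨x, hx, hxval⟩ | hc)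
          · exact hu'c ((Subtype.ext hxval : x = u') ▸ hx)
          · exact hc u'.2
        · exact ⟨y, hyA, (not_not.mp h).1.symm⟩
      · -- preimage recovers A'
        ext v
        constructor
        · rintro (⟨u, hu, hval⟩ | h)
          · exact (Subtype.ext hval : u = v) ▸ hu
          · exact absurd v.2 h
        · intro h; exact Or.inl ⟨v, h, rfl⟩
    · rintro ⟨A, ⟨⟨hne, hyA, hdA, hdAc⟩, hwA⟩, rfl⟩
      refine ⟨⟨⟨w, hwV₁⟩, hwA⟩, hyA, ?_, ?_⟩
      · intro v hv
        obtain ⟨u, huA, hadj⟩ := hdA ↑v hv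
        by_cases hu : u ∈ V₁
        · exact ⟨⟨u, hu⟩, huA, hadj⟩
        · have hvy : (↑v : V) = y := leaf_nb u hu ↑v hadj.symm
          refine ⟨⟨w, hwV₁⟩, hwA, ?_⟩
          show G.Adj ↑v w
          rw [hvy]; exact hyw
      · intro v hv
        have hvA : (↑v : V) ∈ A := not_not.mp hv
        obtain ⟨u, huAc, hadj⟩ := hdAc ↑v (not_not.mpr hvA)
        have hu : u ∈ V₁ := by
          by_contra h
          exact huAc (hLsub A ⟨hne, hyA, hdA, hdAc⟩ u h)
        exact ⟨⟨u, hu⟩, huAc, hadj⟩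
  -- key₂ : the D₂ set is the image of partitions with w on the y side
  have key₂ :
      {A : Set ↥V₂ | A.Nonempty ∧ (⟨w, hwV₂⟩ : ↥V₂) ∉ A ∧
        IsDominating (G.induce V₂) A ∧ IsDominating (G.induce V₂) Aᶜ}
      = (fun A : Set V => (Subtype.val ⁻¹' A : Set ↥V₂)) '' (D ∩ {A : Set V | w ∈ A}ᶜ) := by
    ext A'
    constructor
    · rintro ⟨hne', hw', hd', hdc'⟩
      have hyA : y ∉ Subtype.val '' A' ∪ V₁ᶜ := by
        rintro (⟨u, huA', hval⟩ | h)
        · exact u.2.2 hval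
        · exact h hyV₁
      have hwA : w ∉ Subtype.val '' A' ∪ V₁ᶜ := by
        rintro (⟨u, huA', hval⟩ | h)
        · exact hw' ((Subtype.ext hval : u = ⟨w, hwV₂⟩) ▸ huA')
        · exact h hwV₁
      refine ⟨Subtype.val '' A' ∪ V₁ᶜ, ⟨⟨⟨l₀, Or.inr hl₀⟩, hyA, ?_, ?_⟩, hwA⟩, ?_⟩
      · intro v hvA
        have hvV₁ : v ∈ V₁ := not_not.mp (fun h => hvA (Or.inr h))
        by_cases hvy : v = y
        · exact ⟨l₀, Or.inr hl₀, hvy ▸ hl₀adj⟩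
        · have hvV₂ : v ∈ V₂ := ⟨hvV₁, hvy⟩
          have hvA' : (⟨v, hvV₂⟩ : ↥V₂) ∉ A' := fun h => hvA (Or.inl ⟨_, h, rfl⟩)
          obtain ⟨u', hu', hadj⟩ := hd' ⟨v, hvV₂⟩ hvA'
          exact ⟨↑u', Or.inl ⟨u', hu', rfl⟩, hadj⟩
      · intro v hv
        have hvA : v ∈ Subtype.val '' A' ∪ V₁ᶜ := not_not.mp hv
        rcases hvA with ⟨u, huA', rfl⟩ | h
        · obtain ⟨u', hu'c, hadj⟩ := hdc' u (not_not.mpr huA')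
          refine ⟨↑u', ?_, hadj⟩
          rintro (⟨x, hx, hxval⟩ | hc)
          · exact hu'c ((Subtype.ext hxval : x = u') ▸ hx)
          · exact hc u'.2.1
        · exact ⟨y, hyA, (not_not.mp h).1.symm⟩
      · ext v
        constructor
        · rintro (⟨u, hu, hval⟩ | h)
          · exact (Subtype.ext hval : u = v) ▸ hu
          · exact absurd v.2.1 h
        · intro h; exact Or.inl ⟨v, h, rfl⟩
    · rintro ⟨A, ⟨⟨hne, hyA, hdA, hdAc⟩, hwA⟩, rfl⟩
      have hwA' : w ∉ A := hwA
      constructor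
      · -- nonempty
        obtain ⟨u, huA, hadjwu⟩ := hdA w hwA'
        have huV₁ : u ∈ V₁ := by
          by_contra h
          exact hyw.ne' (leaf_nb u h w hadjwu.symm)
        have huy : u ≠ y := fun h => hyA (h ▸ huA)
        exact ⟨⟨u, huV₁, huy⟩, huA⟩
      refine ⟨hwA', ?_, ?_⟩
      · intro v hv
        obtain ⟨u, huA, hadj⟩ := hdA ↑v hv
        have huV₁ : u ∈ V₁ := by
          by_contra h
          exact v.2.2 (leaf_nb u h ↑v hadj.symm)
        have huy : u ≠ y := fun h => hyA (h ▸ huA)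
        exact ⟨⟨u, huV₁, huy⟩, huA, hadj⟩
      · intro v hv
        have hvA : (↑v : V) ∈ A := not_not.mp hv
        obtain ⟨u, huAc, hadj⟩ := hdAc ↑v (not_not.mpr hvA)
        have huV₁ : u ∈ V₁ := by
          by_contra h
          exact huAc (hLsub A ⟨hne, hyA, hdA, hdAc⟩ u h)
        have huy : u ≠ y := by
          intro h
          rcases y_nb ↑v (h ▸ hadj.symm) with hh | hh
          · exact hwA' (hh ▸ hvA)
          · exact hh v.2.1
        exact ⟨⟨u, huV₁, huy⟩, huAc, hadj⟩
  have inj₁ : Set.InjOn (fun A : Set V => (Subtype.val ⁻¹' A : Set ↥V₁))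
      (D ∩ {A : Set V | w ∈ A}) := by
    rintro A ⟨hA, _⟩ B ⟨hB, _⟩ hEq
    have hEq' : (Subtype.val ⁻¹' A : Set ↥V₁) = Subtype.val ⁻¹' B := hEq
    ext v
    by_cases hv : v ∈ V₁
    · exact Set.ext_iff.mp hEq' ⟨v, hv⟩
    · exact iff_of_true (hLsub A hA v hv) (hLsub B hB v hv)
  have inj₂ : Set.InjOn (fun A : Set V => (Subtype.val ⁻¹' A : Set ↥V₂))
      (D ∩ {A : Set V | w ∈ A}ᶜ) := by
    rintro A ⟨hA, _⟩ B ⟨hB, _⟩ hEq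
    have hEq' : (Subtype.val ⁻¹' A : Set ↥V₂) = Subtype.val ⁻¹' B := hEq
    ext v
    by_cases hv : v ∈ V₁
    · by_cases hvy : v = y
      · subst hvy
        exact iff_of_false hA.2.1 hB.2.1
      · exact Set.ext_iff.mp hEq' ⟨v, hv, hvy⟩
    · exact iff_of_true (hLsub A hA v hv) (hLsub B hB v hv)
  rw [key₁, key₂, Set.ncard_image_of_injOn inj₁, Set.ncard_image_of_injOn inj₂]
  have h := Set.ncard_union_eq (s := D ∩ {A : Set V | w ∈ A}) (t := D ∩ {A : Set V | w ∈ A}ᶜ)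
      (disjoint_compl_right.mono inf_le_right inf_le_right) (Set.toFinite _) (Set.toFinite _)
  rw [Set.inter_union_compl] at h
  exact h
end

section
/- For every integer n ≥ 4, the number of domatic partitions of the path P_n with exactly 2 parts satisfies the Fibonacci recurrence dp(P_n,2) = dp(P_{n-1},2) + dp(P_{n-2},2), with initial values dp(P_2,2) = dp(P_3,2) = 1. -/
open SimpleGraph

/-- `OkAt n i c`: vertex `i` has a neighbor (within `[0,n)`) of the opposite color. -/
def OkAt (n i : ℕ) (c : ℕ → Bool) : Prop :=
  ∃ j, (j + 1 = i ∨ i + 1 = j) ∧ j < n ∧ c j ≠ c i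

/-- Colorings of `[0,n)` (extended by `false`) where vertex `0` is `true` and every
vertex has an opposite-colored neighbor. -/
def BSet (n : ℕ) : Set (ℕ → Bool) :=
  {c | c 0 = true ∧ (∀ i, i < n → OkAt n i c) ∧ ∀ i, n ≤ i → c i = false}

lemma BSet_finite (n : ℕ) : (BSet n).Finite := by
  apply Set.Finite.subset (Set.finite_range
    (fun d : Fin n → Bool => fun i : ℕ => if h : i < n then d ⟨i, h⟩ else false))
  rintro c ⟨-, -, hc⟩
  refine ⟨fun v => c v.val, funext fun i => ?_⟩
  by_cases h : i < n
  · simp [h]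
  · simp [h, hc i (Nat.le_of_not_lt h)]

lemma B_last {n : ℕ} {c : ℕ → Bool} (hc : c ∈ BSet (n + 2)) : c n ≠ c (n + 1) := by
  obtain ⟨-, hok, -⟩ := hc
  obtain ⟨j, hadj, hjn, hne⟩ := hok (n + 1) (by omega)
  have : j = n := by omega
  subst this
  exact hne

lemma B_two : BSet 2 = {fun i => decide (i = 0)} := by
  ext c
  simp only [Set.mem_singleton_iff, BSet, Set.mem_setOf_eq]
  constructor
  · rintro ⟨h0, hok, hhi⟩
    have h1 : c 1 = false := by
      have hne := B_last (n := 0) ⟨h0, hok, hhi⟩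
      rw [h0] at hne
      exact Bool.eq_false_iff.mpr (Ne.symm hne)
    funext i
    match i with
    | 0 => simp [h0]
    | 1 => simp [h1]
    | (k+2) => simp [hhi (k+2) (by omega)]
  · rintro rfl
    refine ⟨by simp, ?_, ?_⟩
    · intro i hi
      interval_cases i
      · exact ⟨1, Or.inr rfl, by omega, by simp⟩
      · exact ⟨0, Or.inl rfl, by omega, by simp⟩
    · intro i hi
      simp only [decide_eq_false_iff_not]
      omega

lemma B_three : BSet 3 = {fun i => decide (i = 0 ∨ i = 2)} := by
  ext c
  simp only [Set.mem_singleton_iff, BSet, Set.mem_setOf_eq]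
  constructor
  · rintro ⟨h0, hok, hhi⟩
    have h1 : c 1 = false := by
      obtain ⟨j, hadj, hjn, hne⟩ := hok 0 (by omega)
      have : j = 1 := by omega
      subst this
      rw [h0] at hne
      exact Bool.eq_false_iff.mpr hne
    have h2 : c 2 = true := by
      obtain ⟨j, hadj, hjn, hne⟩ := hok 2 (by omega)
      have : j = 1 := by omega
      subst this
      rw [h1] at hne
      cases h : c 2
      · rw [h] at hne; exact absurd rfl hne
      · rfl
    funext i
    match i with
    | 0 => simp [h0]
    | 1 => simp [h1]
    | 2 => simp [h2]
    | (k+3) => simp [hhi (k+3) (by omega), Nat.succ_ne_zero]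
  · rintro rfl
    refine ⟨by simp, ?_, ?_⟩
    · intro i hi
      interval_cases i
      · exact ⟨1, Or.inr rfl, by omega, by simp⟩
      · exact ⟨0, Or.inl rfl, by omega, by simp⟩
      · exact ⟨1, Or.inl rfl, by omega, by simp⟩
    · intro i hi
      simp only [decide_eq_false_iff_not]
      omega

/-- The pair-of-parts associated to a coloring. -/
def psi (n : ℕ) (c : ℕ → Bool) : Set (Set (Fin n)) :=
  {{v : Fin n | c v.val = true}, {v : Fin n | c v.val = true}ᶜ}

lemma dp_eq_B (n : ℕ) (hn : 2 ≤ n) :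
    dp (pathGraph n) 2 = (BSet n).ncard := by
  classical
  have hpos : 0 < n := by omega
  have hinj : Set.InjOn (psi n) (BSet n) := by
    rintro c ⟨hc0, hcok, hchi⟩ c' ⟨hc'0, hc'ok, hc'hi⟩ h
    have hmem : {v : Fin n | c v.val = true} ∈ psi n c' := by
      rw [← h]; exact Set.mem_insert _ _
    simp only [psi, Set.mem_insert_iff, Set.mem_singleton_iff] at hmem
    rcases hmem with heq | heq
    · funext i
      by_cases hi : i < n
      · have := Set.ext_iff.mp heq ⟨i, hi⟩
        simp only [Set.mem_setOf_eq] at this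
        cases hci : c i <;> cases hci' : c' i <;> simp_all
      · rw [hchi i (Nat.le_of_not_lt hi), hc'hi i (Nat.le_of_not_lt hi)]
    · exfalso
      have h0 : (⟨0, hpos⟩ : Fin n) ∈ {v : Fin n | c v.val = true} := hc0
      rw [heq] at h0
      exact h0 hc'0
  have himg : psi n '' BSet n =
      {P : Set (Set (Fin n)) | IsDomaticPartition (pathGraph n) P ∧ P.ncard = 2} := by
    ext P
    constructor
    · rintro ⟨c, ⟨hc0, hcok, hchi⟩, rfl⟩
      set S : Set (Fin n) := {v : Fin n | c v.val = true} with hS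
      have hv0S : (⟨0, hpos⟩ : Fin n) ∈ S := hc0
      have hScne : Sᶜ.Nonempty := by
        obtain ⟨j, hadj, hjn, hne⟩ := hcok 0 hpos
        rw [hc0] at hne
        refine ⟨⟨j, hjn⟩, ?_⟩
        simp only [hS, Set.mem_compl_iff, Set.mem_setOf_eq]
        exact hne
      have hkey : ∀ v : Fin n, ∃ u : Fin n, (pathGraph n).Adj v u ∧ c u.val ≠ c v.val := by
        intro v
        obtain ⟨j, hadj, hjn, hne⟩ := hcok v.val v.isLt
        exact ⟨⟨j, hjn⟩, pathGraph_adj.mpr hadj.symm, hne⟩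
      have hpsi : psi n c = {S, Sᶜ} := rfl
      rw [hpsi]
      refine ⟨⟨⟨?_, ?_⟩, ?_⟩, ?_⟩
      · -- ∅ ∉ {S, Sᶜ}
        intro h
        rcases h with h | h
        · rw [← h] at hv0S; exact hv0S
        · simp only [Set.mem_singleton_iff] at h
          obtain ⟨w, hw⟩ := hScne
          rw [← h] at hw; exact hw
      · -- each vertex in exactly one part
        intro a
        by_cases ha : a ∈ S
        · refine ⟨S, ⟨Set.mem_insert _ _, ha⟩, ?_⟩
          rintro y ⟨hy, hay⟩
          rcases hy with rfl | hy
          · rfl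
          · rw [Set.mem_singleton_iff] at hy
            rw [hy] at hay
            exact absurd ha hay
        · refine ⟨Sᶜ, ⟨Set.mem_insert_of_mem _ rfl, ha⟩, ?_⟩
          rintro y ⟨hy, hay⟩
          rcases hy with rfl | hy
          · exact absurd hay ha
          · exact Set.mem_singleton_iff.mp hy
      · -- domination
        intro T hT
        rcases hT with rfl | hT
        · intro v hv
          obtain ⟨u, hadj, hne⟩ := hkey v
          refine ⟨u, ?_, hadj⟩
          simp only [hS, Set.mem_setOf_eq] at hv ⊢
          cases h1 : c u.val <;> cases h2 : c v.val <;> simp_all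
        · rw [Set.mem_singleton_iff] at hT
          subst hT
          intro v hv
          obtain ⟨u, hadj, hne⟩ := hkey v
          refine ⟨u, ?_, hadj⟩
          simp only [hS, Set.mem_compl_iff, Set.mem_setOf_eq] at hv ⊢
          cases h1 : c u.val <;> cases h2 : c v.val <;> simp_all
      · -- ncard
        refine Set.ncard_pair ?_
        intro h
        rw [h] at hv0S
        exact hv0S hc0
    · rintro ⟨⟨⟨hne, huniq⟩, hdom⟩, h2⟩
      obtain ⟨S, T, hST, rfl⟩ := Set.ncard_eq_two.mp h2
      have hmem2 : ∀ b : Set (Fin n), b ∈ ({S, T} : Set (Set (Fin n))) ↔ b = S ∨ b = T := by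
        intro b; simp
      have hcover : ∀ a : Fin n, a ∈ S ∨ a ∈ T := by
        intro a
        obtain ⟨b, ⟨hb, hab⟩, -⟩ := huniq a
        rcases (hmem2 b).mp hb with rfl | rfl
        · exact Or.inl hab
        · exact Or.inr hab
      have hdisj : ∀ a : Fin n, a ∈ S → a ∈ T → False := by
        intro a haS haT
        obtain ⟨b, -, hbu⟩ := huniq a
        have e1 := hbu S ⟨(hmem2 S).mpr (Or.inl rfl), haS⟩
        have e2 := hbu T ⟨(hmem2 T).mpr (Or.inr rfl), haT⟩
        exact hST (e1.trans e2.symm)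
      have hTc : T = Sᶜ := by
        ext a
        constructor
        · intro haT haS; exact hdisj a haS haT
        · intro haS
          rcases hcover a with h | h
          · exact absurd h haS
          · exact h
      obtain ⟨U, hU0, hPU⟩ : ∃ U : Set (Fin n),
          (⟨0, hpos⟩ : Fin n) ∈ U ∧ ({S, T} : Set (Set (Fin n))) = {U, Uᶜ} := by
        by_cases h0 : (⟨0, hpos⟩ : Fin n) ∈ S
        · exact ⟨S, h0, by rw [hTc]⟩
        · refine ⟨Sᶜ, h0, ?_⟩
          rw [hTc, compl_compl, Set.pair_comm]
      set c : ℕ → Bool :=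
        fun i => if h : i < n then (if (⟨i, h⟩ : Fin n) ∈ U then true else false) else false
        with hc
      have hcval : ∀ v : Fin n, c v.val = if v ∈ U then true else false := by
        intro v
        simp [hc, v.isLt]
      have hchigh : ∀ i, n ≤ i → c i = false := by
        intro i h
        simp [hc, Nat.not_lt.mpr h]
      have hUdom : IsDominating (pathGraph n) U :=
        hdom U (by rw [hPU]; exact Set.mem_insert _ _)
      have hUcdom : IsDominating (pathGraph n) Uᶜ :=
        hdom Uᶜ (by rw [hPU]; exact Set.mem_insert_of_mem _ rfl)
      refine ⟨c, ⟨?_, ?_, hchigh⟩, ?_⟩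
      · have := hcval ⟨0, hpos⟩
        simpa [hU0] using this
      · intro i hi
        set v : Fin n := ⟨i, hi⟩ with hv
        by_cases hvU : v ∈ U
        · obtain ⟨u, huc, hadj⟩ := hUcdom v (by simp [hvU])
          refine ⟨u.val, ?_, u.isLt, ?_⟩
          · have hvv : v.val = i := rfl
            have := pathGraph_adj.mp hadj
            omega
          · have e1 : c u.val = false := by
              rw [hcval u, if_neg huc]
            have e2 : c i = true := by
              have := hcval v
              rw [if_pos hvU] at this
              exact this
            simp [e1, e2]
        · obtain ⟨u, huU, hadj⟩ := hUdom v hvU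
          refine ⟨u.val, ?_, u.isLt, ?_⟩
          · have hvv : v.val = i := rfl
            have := pathGraph_adj.mp hadj
            omega
          · have e1 : c u.val = true := by
              rw [hcval u, if_pos huU]
            have e2 : c i = false := by
              have := hcval v
              rw [if_neg hvU] at this
              exact this
            simp [e1, e2]
      · have hSU : {v : Fin n | c v.val = true} = U := by
          ext v
          rw [Set.mem_setOf_eq, hcval v]
          by_cases h : v ∈ U <;> simp [h]
        rw [hPU]
        unfold psi
        rw [hSU]
  rw [dp, ← himg, Set.ncard_image_of_injOn hinj]

def trunc (k : ℕ) (c : ℕ → Bool) : ℕ → Bool := fun i => if i < k then c i else false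

lemma trunc_lt {k i : ℕ} (h : i < k) (c : ℕ → Bool) : trunc k c i = c i := if_pos h

lemma trunc_ge {k i : ℕ} (h : k ≤ i) (c : ℕ → Bool) : trunc k c i = false :=
  if_neg (Nat.not_lt.mpr h)

lemma bool_det : ∀ {a b a' b' : Bool}, a ≠ b → a' ≠ b' → a = a' → b = b' := by decide

lemma B_rec (m : ℕ) : (BSet (m + 4)).ncard = (BSet (m + 3)).ncard + (BSet (m + 2)).ncard := by
  classical
  set D₁ : Set (ℕ → Bool) := {c | c ∈ BSet (m + 4) ∧ c (m + 1) ≠ c (m + 2)} with hD1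
  set D₂ : Set (ℕ → Bool) := {c | c ∈ BSet (m + 4) ∧ c (m + 1) = c (m + 2)} with hD2
  have hunion : BSet (m + 4) = D₁ ∪ D₂ := by
    ext c
    by_cases h : c (m + 1) = c (m + 2) <;> simp [hD1, hD2, h]
  have hdisj : Disjoint D₁ D₂ := by
    rw [Set.disjoint_left]
    rintro c ⟨-, h1⟩ ⟨-, h2⟩
    exact h1 h2
  -- the last value of an element of `BSet (m+4)` is determined
  have hlast4 : ∀ c ∈ BSet (m + 4), c (m + 2) ≠ c (m + 3) := fun c hc => B_last (n := m + 2) hc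
  have hinj1 : Set.InjOn (trunc (m + 3)) D₁ := by
    rintro c ⟨hc, -⟩ c' ⟨hc', -⟩ h
    have heq : ∀ i, i < m + 3 → c i = c' i := by
      intro i hi
      have := congrFun h i
      rwa [trunc_lt hi, trunc_lt hi] at this
    funext i
    by_cases hi : i < m + 3
    · exact heq i hi
    · by_cases hi2 : i = m + 3
      · subst hi2
        have e1 := hlast4 c hc
        have e2 := hlast4 c' hc'
        have e3 := heq (m + 2) (by omega)
        exact bool_det e1 e2 e3
      · rw [hc.2.2 i (by omega), hc'.2.2 i (by omega)]
  have himg1 : trunc (m + 3) '' D₁ = BSet (m + 3) := by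
    ext d
    constructor
    · rintro ⟨c, ⟨⟨hc0, hok, hhi⟩, hd⟩, rfl⟩
      refine ⟨?_, ?_, ?_⟩
      · rw [trunc_lt (by omega) c]; exact hc0
      · intro i hi
        by_cases h2 : i = m + 2
        · subst h2
          refine ⟨m + 1, Or.inl rfl, by omega, ?_⟩
          rw [trunc_lt (by omega) c, trunc_lt (by omega) c]
          exact hd
        · obtain ⟨j, hadj, hjn, hne⟩ := hok i (by omega)
          refine ⟨j, hadj, by omega, ?_⟩
          rw [trunc_lt (by omega) c, trunc_lt (by omega) c]
          exact hne
      · intro i hi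
        exact trunc_ge (by omega) c
    · rintro ⟨hd0, hdok, hdhi⟩
      set c : ℕ → Bool := fun i => if i = m + 3 then !(d (m + 2)) else d i with hc
      have hcv : ∀ i, i ≠ m + 3 → c i = d i := by
        intro i h; simp [hc, h]
      have hctop : c (m + 3) = !(d (m + 2)) := by simp [hc]
      have hlast : d (m + 1) ≠ d (m + 2) := B_last (n := m + 1) ⟨hd0, hdok, hdhi⟩
      refine ⟨c, ⟨⟨?_, ?_, ?_⟩, ?_⟩, ?_⟩
      · rw [hcv 0 (by omega)]; exact hd0
      · intro i hi
        by_cases h3 : i = m + 3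
        · subst h3
          refine ⟨m + 2, Or.inl rfl, by omega, ?_⟩
          rw [hcv (m + 2) (by omega), hctop]
          simp
        · by_cases h2 : i = m + 2
          · subst h2
            refine ⟨m + 1, Or.inl rfl, by omega, ?_⟩
            rw [hcv (m + 1) (by omega), hcv (m + 2) (by omega)]
            exact hlast
          · obtain ⟨j, hadj, hjn, hne⟩ := hdok i (by omega)
            refine ⟨j, hadj, by omega, ?_⟩
            rw [hcv j (by omega), hcv i (by omega)]
            exact hne
      · intro i hi
        rw [hcv i (by omega)]
        exact hdhi i (by omega)
      · rw [hcv (m + 1) (by omega), hcv (m + 2) (by omega)]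
        exact hlast
      · funext i
        by_cases hi : i < m + 3
        · rw [trunc_lt hi, hcv i (by omega)]
        · rw [trunc_ge (by omega) c, hdhi i (by omega)]
  have hinj2 : Set.InjOn (trunc (m + 2)) D₂ := by
    rintro c ⟨hc, he⟩ c' ⟨hc', he'⟩ h
    have heq : ∀ i, i < m + 2 → c i = c' i := by
      intro i hi
      have := congrFun h i
      rwa [trunc_lt hi, trunc_lt hi] at this
    have e2 : c (m + 2) = c' (m + 2) := by
      rw [← he, ← he']
      exact heq (m + 1) (by omega)
    funext i
    by_cases hi : i < m + 2
    · exact heq i hi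
    · by_cases hi2 : i = m + 2
      · subst hi2; exact e2
      · by_cases hi3 : i = m + 3
        · subst hi3
          have f1 := hlast4 c hc
          have f2 := hlast4 c' hc'
          exact bool_det f1 f2 e2
        · rw [hc.2.2 i (by omega), hc'.2.2 i (by omega)]
  have himg2 : trunc (m + 2) '' D₂ = BSet (m + 2) := by
    ext d
    constructor
    · rintro ⟨c, ⟨⟨hc0, hok, hhi⟩, hd⟩, rfl⟩
      refine ⟨?_, ?_, ?_⟩
      · rw [trunc_lt (by omega) c]; exact hc0
      · intro i hi
        by_cases h2 : i = m + 1
        · subst h2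
          obtain ⟨j, hadj, hjn, hne⟩ := hok (m + 1) (by omega)
          have hj : j = m ∨ j = m + 2 := by omega
          rcases hj with h | h
          · refine ⟨m, Or.inl rfl, by omega, ?_⟩
            rw [trunc_lt (by omega) c, trunc_lt (by omega) c]
            rw [h] at hne
            exact hne
          · rw [h] at hne
            exact absurd hd.symm hne
        · obtain ⟨j, hadj, hjn, hne⟩ := hok i (by omega)
          refine ⟨j, hadj, by omega, ?_⟩
          rw [trunc_lt (by omega) c, trunc_lt (by omega) c]
          exact hne
      · intro i hi
        exact trunc_ge (by omega) c
    · rintro ⟨hd0, hdok, hdhi⟩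
      set c : ℕ → Bool :=
        fun i => if i = m + 3 then !(d (m + 1)) else if i = m + 2 then d (m + 1) else d i with hc
      have hcv : ∀ i, i ≠ m + 3 → i ≠ m + 2 → c i = d i := by
        intro i h3 h2; simp [hc, h3, h2]
      have hc2 : c (m + 2) = d (m + 1) := by simp [hc]
      have hc3 : c (m + 3) = !(d (m + 1)) := by simp [hc]
      have hlast : d m ≠ d (m + 1) := B_last (n := m) ⟨hd0, hdok, hdhi⟩
      refine ⟨c, ⟨⟨?_, ?_, ?_⟩, ?_⟩, ?_⟩
      · rw [hcv 0 (by omega) (by omega)]; exact hd0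
      · intro i hi
        by_cases h3 : i = m + 3
        · subst h3
          refine ⟨m + 2, Or.inl rfl, by omega, ?_⟩
          rw [hc2, hc3]
          simp
        · by_cases h2 : i = m + 2
          · subst h2
            refine ⟨m + 3, Or.inr rfl, by omega, ?_⟩
            rw [hc2, hc3]
            simp
          · by_cases h1 : i = m + 1
            · subst h1
              refine ⟨m, Or.inl rfl, by omega, ?_⟩
              rw [hcv m (by omega) (by omega), hcv (m + 1) (by omega) (by omega)]
              exact hlast
            · obtain ⟨j, hadj, hjn, hne⟩ := hdok i (by omega)
              refine ⟨j, hadj, by omega, ?_⟩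
              rw [hcv j (by omega) (by omega), hcv i (by omega) (by omega)]
              exact hne
      · intro i hi
        rw [hcv i (by omega) (by omega)]
        exact hdhi i (by omega)
      · rw [hcv (m + 1) (by omega) (by omega), hc2]
      · funext i
        by_cases hi : i < m + 2
        · rw [trunc_lt hi, hcv i (by omega) (by omega)]
        · rw [trunc_ge (by omega) c, hdhi i (by omega)]
  have hf1 : D₁.Finite := (BSet_finite (m + 4)).subset (fun c hc => hc.1)
  have hf2 : D₂.Finite := (BSet_finite (m + 4)).subset (fun c hc => hc.1)
  rw [hunion, Set.ncard_union_eq hdisj hf1 hf2, ← himg1, ← himg2,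
    Set.ncard_image_of_injOn hinj1, Set.ncard_image_of_injOn hinj2]

/-- The number of 2-part domatic partitions of the path `P_n` satisfies the
Fibonacci recurrence `dp(P_n,2) = dp(P_{n-1},2) + dp(P_{n-2},2)` for `n ≥ 4`,
with initial values `dp(P_2,2) = dp(P_3,2) = 1`. -/
theorem dp_path_fib_recurrence :
    dp (SimpleGraph.pathGraph 2) 2 = 1 ∧
      dp (SimpleGraph.pathGraph 3) 2 = 1 ∧
      ∀ n : ℕ, 4 ≤ n →
        dp (SimpleGraph.pathGraph n) 2 =
          dp (SimpleGraph.pathGraph (n - 1)) 2 +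
            dp (SimpleGraph.pathGraph (n - 2)) 2 := by
  refine ⟨?_, ?_, ?_⟩
  · rw [dp_eq_B 2 (by omega), B_two, Set.ncard_singleton]
  · rw [dp_eq_B 3 (by omega), B_three, Set.ncard_singleton]
  · intro n hn
    obtain ⟨m, rfl⟩ : ∃ m, n = m + 4 := ⟨n - 4, by omega⟩
    have e1 : m + 4 - 1 = m + 3 := by omega
    have e2 : m + 4 - 2 = m + 2 := by omega
    rw [e1, e2, dp_eq_B (m + 4) (by omega), dp_eq_B (m + 3) (by omega),
      dp_eq_B (m + 2) (by omega)]
    exact B_rec m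
end

section
/- For every integer n ≥ 2, the number of domatic partitions of the path P_n with exactly 2 parts equals the (n−1)-st Fibonacci number: dp(P_n,2) = F_{n-1}, where F_1 = F_2 = 1 and F_{k} = F_{k-1} + F_{k-2} for k ≥ 3. -/
open Finset


def okA : ∀ {m : ℕ}, Bool → (Fin m → Bool) → Bool
  | 0, _, _ => true
  | 1, v, g => g 0 != v
  | (_+2), v, g => ((g 0 != v) || (g 0 != g 1)) && okA (g 0) (Fin.tail g)

def sat {m : ℕ} (v : Bool) (g : Fin m → Bool) (i : Fin m) : Prop :=
  ((if i.1 = 0 then v else g ⟨i.1 - 1, Nat.lt_of_le_of_lt (Nat.sub_le _ 1) i.isLt⟩) ≠ g i)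
    ∨ (∃ h : i.1 + 1 < m, g ⟨i.1 + 1, h⟩ ≠ g i)

lemma sat_succ {m : ℕ} (v : Bool) (g : Fin (m + 2) → Bool) (j : Fin (m + 1)) :
    sat v g j.succ ↔ sat (g 0) (Fin.tail g) j := by
  have key : (if (j.succ : Fin (m+2)).1 = 0 then v
      else g ⟨(j.succ : Fin (m+2)).1 - 1, Nat.lt_of_le_of_lt (Nat.sub_le _ 1) (j.succ).isLt⟩)
      = (if j.1 = 0 then g 0 else Fin.tail g ⟨j.1 - 1, Nat.lt_of_le_of_lt (Nat.sub_le _ 1) j.isLt⟩) := by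
    rw [if_neg (by simp)]
    by_cases h : j.1 = 0
    · rw [if_pos h]; congr 1; apply Fin.ext; simp [h]
    · rw [if_neg h]
      show g _ = g (Fin.succ _)
      congr 1; apply Fin.ext; simp; omega
  unfold sat
  constructor
  · rintro (h | ⟨hb, h⟩)
    · left; rw [key] at h; exact h
    · right; exact ⟨by simp only [Fin.val_succ] at hb ⊢; omega, h⟩
  · rintro (h | ⟨hb, h⟩)
    · left; rw [key]; exact h
    · right; exact ⟨by simp only [Fin.val_succ] at hb ⊢; omega, h⟩

lemma okA_iff : ∀ {m : ℕ} (v : Bool) (g : Fin m → Bool),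
    okA v g = true ↔ ∀ i, sat v g i
  | 0, v, g => by simp [okA]
  | 1, v, g => by
    simp only [okA, bne_iff_ne, ne_eq, Fin.forall_fin_one]
    unfold sat
    simp only [Fin.isValue, Fin.val_zero, if_pos rfl]
    constructor
    · intro h; left; exact fun hh => h hh.symm
    · rintro (h | ⟨h, _⟩)
      · exact fun hh => h hh.symm
      · omega
  | (m+2), v, g => by
    have ih := okA_iff (g 0) (Fin.tail g)
    have sat0 : sat v g 0 ↔ (¬g 0 = v ∨ ¬g 0 = g 1) := by
      unfold sat
      simp only [Fin.val_zero, if_pos rfl]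
      constructor
      · rintro (h | ⟨hb, h⟩)
        · left; exact fun hh => h hh.symm
        · right
          have e : (⟨0 + 1, hb⟩ : Fin (m+2)) = 1 := rfl
          rw [e] at h
          exact fun hh => h hh.symm
      · rintro (h | h)
        · left; exact fun hh => h hh.symm
        · right
          exact ⟨by omega, by exact fun hh => h hh.symm⟩
    have forall_split : (∀ i : Fin (m+2), sat v g i) ↔
        (sat v g 0 ∧ ∀ j : Fin (m+1), sat v g j.succ) := Fin.forall_fin_succ
    rw [forall_split, sat0]
    simp only [okA, Bool.and_eq_true, Bool.or_eq_true, bne_iff_ne, ne_eq, ih]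
    constructor
    · rintro ⟨h1, h2⟩; exact ⟨h1, fun j => (sat_succ v g j).mpr (h2 j)⟩
    · rintro ⟨h1, h2⟩; exact ⟨h1, fun j => (sat_succ v g j).mp (h2 j)⟩

def cntN (m : ℕ) (v b : Bool) : ℕ :=
  (univ.filter (fun g : Fin (m + 1) → Bool => okA v g = true ∧ g 0 = b)).card

lemma cntN_succ (m : ℕ) (v b : Bool) :
    cntN (m + 1) v b
      = (univ.filter (fun h : Fin (m + 1) → Bool =>
          (((b != v) || (b != h 0)) && okA b h) = true)).card := by
  unfold cntN
  apply Finset.card_nbij' (fun g => Fin.tail g) (fun h => Fin.cons b h)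
  · intro g hg
    simp only [mem_coe, mem_filter, mem_univ, true_and] at hg ⊢
    obtain ⟨hok, h0⟩ := hg
    have hdef : okA v g = (((g 0 != v) || (g 0 != g 1)) && okA (g 0) (Fin.tail g)) := rfl
    rw [hdef] at hok
    have h1 : g 1 = Fin.tail g 0 := by
      show g 1 = g (Fin.succ 0)
      congr 1
    rw [h0, h1] at hok
    exact hok
  · intro h hh
    simp only [mem_coe, mem_filter, mem_univ, true_and] at hh ⊢
    constructor
    · have hdef : okA v (Fin.cons (α := fun _ => Bool) b h)
          = (((Fin.cons (α := fun _ => Bool) b h 0 != v)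
              || (Fin.cons (α := fun _ => Bool) b h 0 != Fin.cons (α := fun _ => Bool) b h 1))
            && okA (Fin.cons (α := fun _ => Bool) b h 0)
              (Fin.tail (Fin.cons (α := fun _ => Bool) b h))) := rfl
      rw [hdef]
      have e1 : Fin.cons (α := fun _ => Bool) b h (1 : Fin (m+2)) = h 0 := by
        rw [show (1 : Fin (m+2)) = Fin.succ 0 from rfl, Fin.cons_succ]
      simp only [Fin.cons_zero, Fin.tail_cons, e1]
      exact hh
    · exact Fin.cons_zero (α := fun _ => Bool) b h
  · intro g hg
    simp only [mem_coe, mem_filter, mem_univ, true_and] at hg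
    rw [← hg.2]
    exact Fin.cons_self_tail g
  · intro h _
    exact Fin.tail_cons (α := fun _ => Bool) b h

lemma cntN_succ_ne (m : ℕ) (v b : Bool) (hbv : b ≠ v) :
    cntN (m + 1) v b = cntN m b true + cntN m b false := by
  rw [cntN_succ]
  have hb : (b != v) = true := by simp [hbv]
  have e : (univ.filter (fun h : Fin (m + 1) → Bool =>
      (((b != v) || (b != h 0)) && okA b h) = true))
      = univ.filter (fun h : Fin (m + 1) → Bool => okA b h = true) := by
    apply filter_congr
    intro h _
    simp [hb]
  rw [e]
  unfold cntN
  rw [← Finset.card_filter_add_card_filter_not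
    (s := univ.filter (fun h : Fin (m + 1) → Bool => okA b h = true))
    (p := fun h => h 0 = true)]
  congr 1
  · rw [Finset.filter_filter]
  · rw [Finset.filter_filter]
    congr 1
    apply filter_congr
    intro h _
    simp [Bool.not_eq_true]

lemma cntN_succ_eq (m : ℕ) (b : Bool) :
    cntN (m + 1) b b = cntN m b (!b) := by
  rw [cntN_succ]
  unfold cntN
  congr 1
  apply filter_congr
  intro h _
  simp only [bne_self_eq_false, Bool.false_or, Bool.and_eq_true, bne_iff_ne, ne_eq,
    eq_iff_iff]
  constructor
  · rintro ⟨h1, h2⟩; exact ⟨h2, by cases b <;> cases hx : h 0 <;> simp_all⟩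
  · rintro ⟨h1, h2⟩; exact ⟨by cases b <;> simp_all, h1⟩

lemma cntN_fib : ∀ m : ℕ, cntN m true false = Nat.fib (m + 1) ∧ cntN m true true = Nat.fib m
    ∧ cntN m false true = Nat.fib (m + 1) ∧ cntN m false false = Nat.fib m := by
  intro m
  induction m with
  | zero => refine ⟨?_, ?_, ?_, ?_⟩ <;> decide
  | succ m ih =>
    obtain ⟨h1, h2, h3, h4⟩ := ih
    refine ⟨?_, ?_, ?_, ?_⟩
    · rw [cntN_succ_ne m true false (by decide), h3, h4, Nat.fib_add_two]
      omega
    · rw [cntN_succ_eq m true]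
      exact h1
    · rw [cntN_succ_ne m false true (by decide), h2, h1, Nat.fib_add_two]
    · rw [cntN_succ_eq m false]
      exact h3

def goodP (n : ℕ) (f : Fin n → Bool) : Prop :=
  ∀ v, ∃ u, (SimpleGraph.pathGraph n).Adj v u ∧ f u ≠ f v

lemma goodP_iff (m : ℕ) (f : Fin (m + 2) → Bool) :
    goodP (m + 2) f ↔ (Fin.tail f 0 ≠ f 0 ∧ okA (f 0) (Fin.tail f) = true) := by
  rw [okA_iff]
  unfold goodP
  rw [Fin.forall_fin_succ]
  apply and_congr
  · constructor
    · rintro ⟨u, hadj, hne⟩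
      rw [SimpleGraph.pathGraph_adj] at hadj
      have hu : u = Fin.succ 0 := by
        apply Fin.ext
        simp only [Fin.val_zero] at hadj
        rcases hadj with h | h <;> simp <;> omega
      rw [hu] at hne
      exact hne
    · intro h
      refine ⟨Fin.succ 0, ?_, h⟩
      rw [SimpleGraph.pathGraph_adj]
      left
      simp
  · apply forall_congr'
    intro j
    have hval : (Fin.succ j : Fin (m + 2)).1 = j.1 + 1 := rfl
    have hL : ∀ (hlt : j.1 < m + 2),
        (if j.1 = 0 then f 0 else Fin.tail f ⟨j.1 - 1, Nat.lt_of_le_of_lt (Nat.sub_le _ 1) j.isLt⟩)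
          = f ⟨j.1, hlt⟩ := by
      intro hlt
      by_cases h0 : j.1 = 0
      · rw [if_pos h0]; congr 1; apply Fin.ext; simp [h0]
      · rw [if_neg h0]
        show f (Fin.succ _) = f _
        congr 1; apply Fin.ext; simp; omega
    constructor
    · rintro ⟨u, hadj, hne⟩
      rw [SimpleGraph.pathGraph_adj] at hadj
      unfold sat
      rcases hadj with h | h
      · -- u.1 = j.1 + 2
        right
        have hb : j.1 + 1 < m + 1 := by rw [hval] at h; omega
        refine ⟨hb, ?_⟩
        have : Fin.tail f ⟨j.1 + 1, hb⟩ = f u := by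
          show f (Fin.succ _) = f u
          congr 1; apply Fin.ext; rw [hval] at h; simp; omega
        rw [this]
        exact hne
      · -- u.1 + 1 = j.1 + 1, so u.1 = j.1
        left
        rw [hL (by omega)]
        have : (⟨j.1, by omega⟩ : Fin (m + 2)) = u := by
          apply Fin.ext; rw [hval] at h; simp; omega
        rw [this]
        exact hne
    · intro hs
      unfold sat at hs
      rcases hs with hl | ⟨hb, hr⟩
      · refine ⟨⟨j.1, by omega⟩, ?_, ?_⟩
        · rw [SimpleGraph.pathGraph_adj]
          right
          rfl
        · rw [hL (by omega)] at hl
          exact hl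
      · refine ⟨⟨j.1 + 2, by omega⟩, ?_, ?_⟩
        · rw [SimpleGraph.pathGraph_adj]
          left
          rfl
        · have : Fin.tail f ⟨j.1 + 1, hb⟩ = f ⟨j.1 + 2, by omega⟩ := by
            show f (Fin.succ _) = f _
            congr 1
          rw [this] at hr
          exact hr


/-- the partition associated to a 2-coloring -/
def Phi (n : ℕ) (f : Fin n → Bool) : Set (Set (Fin n)) :=
  {{v | f v = true}, {v | f v = false}}

lemma dpSet_eq (m : ℕ) :
    {P : Set (Set (Fin (m+2))) | IsDomaticPartition (SimpleGraph.pathGraph (m+2)) P ∧ P.ncard = 2}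
      = Phi (m+2) '' {f | goodP (m+2) f ∧ f 0 = true} := by
  set n := m + 2 with hnm
  have hn' : 0 < n := by omega
  ext P
  simp only [Set.mem_setOf_eq, Set.mem_image]
  constructor
  · rintro ⟨⟨⟨hemp, huniq⟩, hdom⟩, hcard⟩
    obtain ⟨S, T, hST, rfl⟩ := Set.ncard_eq_two.mp hcard
    have hcover : ∀ a : Fin n, a ∈ S ∨ a ∈ T := by
      intro a
      obtain ⟨b, ⟨hbP, hab⟩, -⟩ := huniq a
      rcases hbP with rfl | rfl
      · exact Or.inl hab
      · exact Or.inr hab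
    have hdisj : ∀ a : Fin n, a ∈ S → a ∈ T → False := by
      intro a haS haT
      obtain ⟨b, -, hb⟩ := huniq a
      have h1 := hb S ⟨Or.inl rfl, haS⟩
      have h2 := hb T ⟨Or.inr rfl, haT⟩
      exact hST (h1.trans h2.symm)
    have key : ∀ S T : Set (Fin n), S ≠ T →
        (∀ a : Fin n, a ∈ S ∨ a ∈ T) → (∀ a : Fin n, a ∈ S → a ∈ T → False) →
        IsDominating (SimpleGraph.pathGraph n) S → IsDominating (SimpleGraph.pathGraph n) T →
        (0 : Fin n) ∈ S →
        ∃ f, (goodP n f ∧ f 0 = true) ∧ Phi n f = {S, T} := by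
      clear hcover hdisj hST hdom hcard hemp huniq S T
      intro S T hST hcover hdisj hdomS hdomT h0
      classical
      refine ⟨fun v => decide (v ∈ S), ⟨?_, by simp [h0]⟩, ?_⟩
      · intro v
        by_cases hv : v ∈ S
        · obtain ⟨u, huT, hadj⟩ := hdomT v (fun hvT => hdisj v hv hvT)
          refine ⟨u, hadj, ?_⟩
          have huS : u ∉ S := fun huS => hdisj u huS huT
          simp [hv, huS]
        · obtain ⟨u, huS, hadj⟩ := hdomS v hv
          refine ⟨u, hadj, ?_⟩
          simp [hv, huS]
      · unfold Phi
        have e1 : {v : Fin n | decide (v ∈ S) = true} = S := by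
          ext v; simp
        have e2 : {v : Fin n | decide (v ∈ S) = false} = T := by
          ext v
          simp only [Set.mem_setOf_eq, decide_eq_false_iff_not]
          constructor
          · intro hv; rcases hcover v with h | h
            · exact absurd h hv
            · exact h
          · intro hv hvS; exact hdisj v hvS hv
        rw [e1, e2]
    have h0n : (0 : Fin n) ∈ S ∨ (0 : Fin n) ∈ T := hcover _
    rcases h0n with h0 | h0
    · obtain ⟨f, hf, hPhi⟩ := key S T hST hcover hdisj
        (hdom S (Or.inl rfl)) (hdom T (Or.inr rfl)) h0
      exact ⟨f, by simpa using hf, hPhi⟩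
    · obtain ⟨f, hf, hPhi⟩ := key T S (Ne.symm hST)
        (fun a => (hcover a).symm) (fun a h1 h2 => hdisj a h2 h1)
        (hdom T (Or.inr rfl)) (hdom S (Or.inl rfl)) h0
      refine ⟨f, by simpa using hf, ?_⟩
      rw [hPhi, Set.pair_comm]
  · rintro ⟨f, ⟨hgood, hf0⟩, rfl⟩
    have hSf : ∃ v, f v = false := by
      obtain ⟨u, -, hne⟩ := hgood 0
      rw [hf0] at hne
      exact ⟨u, by simpa using hne⟩
    have hne_sets : {v : Fin n | f v = true} ≠ {v : Fin n | f v = false} := by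
      intro h
      have : (0 : Fin n) ∈ {v : Fin n | f v = true} := hf0
      rw [h] at this
      simp only [Set.mem_setOf_eq] at this
      rw [hf0] at this
      exact absurd this (by simp)
    refine ⟨⟨⟨?_, ?_⟩, ?_⟩, ?_⟩
    · -- ∅ ∉ P
      intro h
      rcases h with h | h
      · have h0 : (0 : Fin n) ∈ {v : Fin n | f v = true} := hf0
        rw [← h] at h0
        exact h0
      · rw [Set.mem_singleton_iff] at h
        obtain ⟨v, hv⟩ := hSf
        have h0 : v ∈ {v : Fin n | f v = false} := hv
        rw [← h] at h0
        exact h0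
    · -- unique block
      intro a
      cases ha : f a with
      | true =>
        refine ⟨{v | f v = true}, ⟨Or.inl rfl, ha⟩, ?_⟩
        rintro b ⟨hb | hb, hab⟩
        · exact hb
        · subst hb; simp only [Set.mem_setOf_eq] at hab; rw [ha] at hab; simp at hab
      | false =>
        refine ⟨{v | f v = false}, ⟨Or.inr rfl, ha⟩, ?_⟩
        rintro b ⟨hb | hb, hab⟩
        · subst hb; simp only [Set.mem_setOf_eq] at hab; rw [ha] at hab; simp at hab
        · exact hb
    · -- dominating
      rintro S (rfl | rfl) <;> intro v hv <;>
        obtain ⟨u, hadj, hne⟩ := hgood v <;>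
        simp only [Set.mem_setOf_eq] at hv ⊢
      · refine ⟨u, ?_, hadj⟩
        cases hfv : f v <;> cases hfu : f u <;> simp_all
      · refine ⟨u, ?_, hadj⟩
        cases hfv : f v <;> cases hfu : f u <;> simp_all
    · exact Set.ncard_pair hne_sets

lemma phi_injOn (m : ℕ) :
    Set.InjOn (Phi (m+2)) {f | goodP (m+2) f ∧ f 0 = true} := by
  set n := m + 2 with hnm
  rintro f ⟨-, hf0⟩ g ⟨-, hg0⟩ h
  unfold Phi at h
  have hmem : {v : Fin n | f v = true} ∈ ({{v : Fin n | g v = true}, {v : Fin n | g v = false}} :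
      Set (Set (Fin n))) := by
    rw [← h]; exact Or.inl rfl
  have heq : {v : Fin n | f v = true} = {v : Fin n | g v = true} := by
    rcases hmem with h1 | h1
    · exact h1
    · exfalso
      have : (0 : Fin n) ∈ {v : Fin n | f v = true} := hf0
      rw [h1] at this
      simp only [Set.mem_setOf_eq] at this
      rw [hg0] at this
      simp at this
  funext v
  have := Set.ext_iff.mp heq v
  simp only [Set.mem_setOf_eq] at this
  cases hfv : f v <;> cases hgv : g v <;> simp_all


lemma card_main (m : ℕ) :
    (univ.filter (fun f : Fin (m+2) → Bool =>
      f 0 = true ∧ Fin.tail f 0 = false ∧ okA true (Fin.tail f) = true)).card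
    = cntN m true false := by
  unfold cntN
  apply Finset.card_nbij' Fin.tail (fun h => Fin.cons (α := fun _ => Bool) true h)
  · intro f hf
    simp only [mem_coe, mem_filter, mem_univ, true_and] at hf ⊢
    exact ⟨hf.2.2, hf.2.1⟩
  · intro h hh
    simp only [mem_coe, mem_filter, mem_univ, true_and] at hh ⊢
    refine ⟨Fin.cons_zero _ _, ?_, ?_⟩
    · rw [Fin.tail_cons]; exact hh.2
    · rw [Fin.tail_cons]; exact hh.1
  · intro f hf
    simp only [mem_coe, mem_filter, mem_univ, true_and] at hf
    rw [← hf.1]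
    exact Fin.cons_self_tail f
  · intro h _
    exact Fin.tail_cons (α := fun _ => Bool) true h

/-- For every `n ≥ 2`, the number of 2-part domatic partitions of the path `P_n`
is the `(n-1)`-st Fibonacci number (with `F_1 = F_2 = 1`). -/
theorem dp_path_eq_fib (n : ℕ) (hn : 2 ≤ n) :
    dp (SimpleGraph.pathGraph n) 2 = Nat.fib (n - 1) := by
  obtain ⟨m, rfl⟩ : ∃ m, n = m + 2 := ⟨n - 2, by omega⟩
  rw [show m + 2 - 1 = m + 1 from rfl]
  unfold dp
  rw [dpSet_eq m, Set.ncard_image_of_injOn (phi_injOn m)]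
  have hset : {f : Fin (m+2) → Bool | goodP (m+2) f ∧ f 0 = true}
      = ↑(univ.filter (fun f : Fin (m+2) → Bool =>
          f 0 = true ∧ Fin.tail f 0 = false ∧ okA true (Fin.tail f) = true)) := by
    ext f
    simp only [Set.mem_setOf_eq, Finset.mem_coe, mem_filter, mem_univ, true_and]
    rw [goodP_iff]
    constructor
    · rintro ⟨⟨hne, hok⟩, h0⟩
      rw [h0] at hne hok
      exact ⟨h0, by cases h : Fin.tail f 0 <;> simp_all, hok⟩
    · rintro ⟨h0, htl, hok⟩
      rw [h0]
      exact ⟨⟨by rw [htl]; simp, hok⟩, rfl⟩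
  rw [hset, Set.ncard_coe_finset, card_main m, (cntN_fib m).1]
end

section
/- For every integer n ≥ 2, the corona P_n ∘ K_1 (obtained from the path P_n by attaching one new pendant leaf to each vertex) has exactly 2^{n-1} domatic partitions with 2 parts, and its domatic number is 2; equivalently DP(P_n ∘ K_1, x) = x + 2^{n-1}x². -/
/-- The corona `G ∘ K₁`: attach one new pendant leaf `Sum.inr v` to each
vertex `Sum.inl v` of `G`. -/
def coronaK1 {V : Type*} (G : SimpleGraph V) : SimpleGraph (V ⊕ V) where
  Adj a b :=
    match a, b with
    | Sum.inl u, Sum.inl v => G.Adj u v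
    | Sum.inl u, Sum.inr v => u = v
    | Sum.inr u, Sum.inl v => u = v
    | Sum.inr _, Sum.inr _ => False
  symm := by
    constructor
    rintro (u | u) (v | v) h <;> simp_all [SimpleGraph.adj_comm]
  loopless := by
    constructor
    rintro (u | u) h <;> simp_all

section Aux

variable {V : Type*} {G : SimpleGraph V}

def Af (f : V → Bool) : Set (V ⊕ V) :=
  {x | Sum.elim (fun i => f i = true) (fun i => f i = false) x}

lemma mem_Af_inl (f : V → Bool) (i : V) : Sum.inl i ∈ Af f ↔ f i = true := Iff.rfl
lemma mem_Af_inr (f : V → Bool) (i : V) : Sum.inr i ∈ Af f ↔ f i = false := Iff.rfl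

lemma corona_adj_inl_inr (i : V) : (coronaK1 G).Adj (Sum.inl i) (Sum.inr i) := rfl
lemma corona_adj_inr_inl (i : V) : (coronaK1 G).Adj (Sum.inr i) (Sum.inl i) := rfl

lemma corona_adj_inr_eq {i : V} {u : V ⊕ V} (h : (coronaK1 G).Adj (Sum.inr i) u) :
    u = Sum.inl i := by
  cases u with
  | inl j => have h' : i = j := h; rw [h']
  | inr j => exact (h : False).elim

lemma Af_ne_compl (f : V → Bool) (i0 : V) : Af f ≠ (Af f)ᶜ := by
  intro h
  by_cases hf : f i0 = true
  · have h1 : Sum.inl i0 ∈ Af f := hf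
    have h2 := h ▸ h1
    exact h2 h1
  · have h1 : Sum.inr i0 ∈ Af f := by
      simp only [mem_Af_inr]; cases hfi : f i0 <;> simp_all
    have h2 := h ▸ h1
    exact h2 h1

lemma Phi_domatic (f : V → Bool) (i0 : V) :
    IsDomaticPartition (coronaK1 G) ({Af f, (Af f)ᶜ} : Set (Set (V ⊕ V))) := by
  constructor
  · constructor
    · intro h
      rcases h with h | h
      · by_cases hf : f i0 = true
        · have h1 : Sum.inl i0 ∈ Af f := hf
          rw [← h] at h1; exact h1
        · have h1 : Sum.inr i0 ∈ Af f := by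
            simp only [mem_Af_inr]; cases hfi : f i0 <;> simp_all
          rw [← h] at h1; exact h1
      · rw [Set.mem_singleton_iff] at h
        by_cases hf : f i0 = true
        · have h1 : Sum.inr i0 ∈ (Af f)ᶜ := by
            intro hc; rw [mem_Af_inr] at hc; simp_all
          rw [← h] at h1; exact h1
        · have h1 : Sum.inl i0 ∈ (Af f)ᶜ := by
            intro hc; rw [mem_Af_inl] at hc; simp_all
          rw [← h] at h1; exact h1
    · intro a
      by_cases ha : a ∈ Af f
      · refine ⟨Af f, ⟨Or.inl rfl, ha⟩, ?_⟩
        rintro b ⟨hb, hab⟩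
        rcases hb with rfl | hb
        · rfl
        · rw [Set.mem_singleton_iff] at hb; subst hb; exact absurd ha hab
      · refine ⟨(Af f)ᶜ, ⟨Or.inr rfl, ha⟩, ?_⟩
        rintro b ⟨hb, hab⟩
        rcases hb with rfl | hb
        · exact absurd hab ha
        · rw [Set.mem_singleton_iff] at hb; subst hb; rfl
  · intro S hS
    rcases hS with rfl | hS
    · intro v hv
      cases v with
      | inl i =>
        refine ⟨Sum.inr i, ?_, corona_adj_inl_inr i⟩
        rw [mem_Af_inr]
        rw [mem_Af_inl] at hv
        cases hfi : f i <;> simp_all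
      | inr i =>
        refine ⟨Sum.inl i, ?_, corona_adj_inr_inl i⟩
        rw [mem_Af_inl]
        rw [mem_Af_inr] at hv
        cases hfi : f i <;> simp_all
    · rw [Set.mem_singleton_iff] at hS; subst hS
      intro v hv
      have hv' : v ∈ Af f := by simpa using hv
      cases v with
      | inl i =>
        refine ⟨Sum.inr i, ?_, corona_adj_inl_inr i⟩
        intro hc
        rw [mem_Af_inr] at hc
        rw [mem_Af_inl] at hv'
        simp_all
      | inr i =>
        refine ⟨Sum.inl i, ?_, corona_adj_inr_inl i⟩
        intro hc
        rw [mem_Af_inl] at hc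
        rw [mem_Af_inr] at hv'
        simp_all

lemma Phi_ncard (f : V → Bool) (i0 : V) :
    ({Af f, (Af f)ᶜ} : Set (Set (V ⊕ V))).ncard = 2 :=
  Set.ncard_pair (Af_ne_compl f i0)

lemma ncard_le_two (i0 : V) (P : Set (Set (V ⊕ V)))
    (hP : IsDomaticPartition (coronaK1 G) P) : P.ncard ≤ 2 := by
  obtain ⟨T1, ⟨hT1P, hT1⟩, uniq1⟩ := hP.1.2 (Sum.inl i0)
  obtain ⟨T2, ⟨hT2P, hT2⟩, uniq2⟩ := hP.1.2 (Sum.inr i0)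
  have hsub : P ⊆ ({T1, T2} : Set (Set (V ⊕ V))) := by
    intro S hS
    by_cases h : Sum.inr i0 ∈ S
    · right; exact (uniq2 S ⟨hS, h⟩) ▸ rfl
    · left
      obtain ⟨u, huS, hadj⟩ := hP.2 S hS (Sum.inr i0) h
      have := corona_adj_inr_eq hadj
      subst this
      exact (uniq1 S ⟨hS, huS⟩) ▸ rfl
  calc P.ncard ≤ ({T1, T2} : Set (Set (V ⊕ V))).ncard :=
        Set.ncard_le_ncard hsub ((Set.finite_singleton T2).insert T1)
    _ ≤ 2 := by
        refine le_trans (Set.ncard_insert_le _ _) ?_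
        simp

lemma domatic_two_eq (i0 : V) (P : Set (Set (V ⊕ V)))
    (hP : IsDomaticPartition (coronaK1 G) P) (h2 : P.ncard = 2) :
    ∃ f : V → Bool, f i0 = true ∧ P = ({Af f, (Af f)ᶜ} : Set (Set (V ⊕ V))) := by
  classical
  obtain ⟨A, B, hAB, rfl⟩ := Set.ncard_eq_two.mp h2
  have key : ∀ A B : Set (V ⊕ V), A ≠ B →
      ({A, B} : Set (Set (V ⊕ V))) ∈ ({P : Set (Set (V ⊕ V)) |
        IsDomaticPartition (coronaK1 G) P} : Set _) → Sum.inl i0 ∈ A →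
      ∃ f : V → Bool, f i0 = true ∧
        ({A, B} : Set (Set (V ⊕ V))) = ({Af f, (Af f)ᶜ} : Set (Set (V ⊕ V))) := by
    intro A B hAB hPmem hi0
    have hP' : IsDomaticPartition (coronaK1 G) ({A, B} : Set (Set (V ⊕ V))) := hPmem
    have hA : A ∈ ({A, B} : Set (Set (V ⊕ V))) := Or.inl rfl
    have hB : B ∈ ({A, B} : Set (Set (V ⊕ V))) := Or.inr rfl
    have excl : ∀ x, x ∈ A → x ∈ B → False := by
      intro x hxA hxB
      obtain ⟨T, _, uniq⟩ := hP'.1.2 x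
      exact hAB ((uniq A ⟨hA, hxA⟩).trans (uniq B ⟨hB, hxB⟩).symm)
    have tot : ∀ x : V ⊕ V, x ∈ A ∨ x ∈ B := by
      intro x
      obtain ⟨T, ⟨hTP, hxT⟩, _⟩ := hP'.1.2 x
      rcases hTP with rfl | hTP
      · exact Or.inl hxT
      · rw [Set.mem_singleton_iff] at hTP; subst hTP; exact Or.inr hxT
    have nopair : ∀ (S T : Set (V ⊕ V)), S ∈ ({A, B} : Set (Set (V ⊕ V))) →
        T ∈ ({A, B} : Set (Set (V ⊕ V))) → S ≠ T → ∀ i : V,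
        Sum.inl i ∈ S → Sum.inr i ∈ S → False := by
      intro S T hSP hTP hST i hil hir
      have hirT : Sum.inr i ∉ T := by
        intro hc
        obtain ⟨U, _, uniq⟩ := hP'.1.2 (Sum.inr i)
        exact hST ((uniq S ⟨hSP, hir⟩).trans (uniq T ⟨hTP, hc⟩).symm)
      obtain ⟨u, huT, hadj⟩ := hP'.2 T hTP (Sum.inr i) hirT
      have := corona_adj_inr_eq hadj
      subst this
      obtain ⟨U, _, uniq⟩ := hP'.1.2 (Sum.inl i)
      exact hST ((uniq S ⟨hSP, hil⟩).trans (uniq T ⟨hTP, huT⟩).symm)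
    set f : V → Bool := fun i => decide (Sum.inl i ∈ A) with hf
    have hAf : A = Af f := by
      ext x
      cases x with
      | inl i => simp [Af, hf]
      | inr i =>
        rw [mem_Af_inr]
        simp only [hf, decide_eq_false_iff_not]
        constructor
        · intro hx hc
          exact nopair A B hA hB hAB i hc hx
        · intro hx
          rcases tot (Sum.inr i) with h | h
          · exact h
          · rcases tot (Sum.inl i) with h' | h'
            · exact absurd h' hx
            · exact (nopair B A hB hA (Ne.symm hAB) i h' h).elim
    have hBf : B = (Af f)ᶜ := by
      rw [← hAf]
      ext x
      constructor
      · intro hx hc; exact excl x hc hx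
      · intro hx
        rcases tot x with h | h
        · exact absurd h hx
        · exact h
    exact ⟨f, by simp [hf, hi0], by rw [hAf, hBf]⟩
  rcases (show Sum.inl i0 ∈ A ∨ Sum.inl i0 ∈ B from by
    obtain ⟨T, ⟨hTP, hxT⟩, _⟩ := hP.1.2 (Sum.inl i0)
    rcases hTP with rfl | hTP
    · exact Or.inl hxT
    · rw [Set.mem_singleton_iff] at hTP; subst hTP; exact Or.inr hxT) with h | h
  · exact key A B hAB hP h
  · have hcomm : ({A, B} : Set (Set (V ⊕ V))) = {B, A} := Set.pair_comm A B
    obtain ⟨f, hf, heq⟩ := key B A (Ne.symm hAB) (by rw [← hcomm]; exact hP) h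
    exact ⟨f, hf, by rw [hcomm, heq]⟩

end Aux

/-- For `n ≥ 2`, the corona `P_n ∘ K₁` has exactly `2^(n-1)` domatic partitions
with two parts, and its domatic number is `2`; equivalently
`DP(P_n ∘ K₁, x) = x + 2^(n-1) x²`. -/


theorem dp_corona_path (n : ℕ) (hn : 2 ≤ n) :
    dp (coronaK1 (SimpleGraph.pathGraph n)) 2 = 2 ^ (n - 1) ∧
      (∃ P : Set (Set (Fin n ⊕ Fin n)),
        IsDomaticPartition (coronaK1 (SimpleGraph.pathGraph n)) P ∧ P.ncard = 2) ∧
      (∀ P : Set (Set (Fin n ⊕ Fin n)),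
        IsDomaticPartition (coronaK1 (SimpleGraph.pathGraph n)) P → P.ncard ≤ 2) := by
  classical
  have i0 : Fin n := ⟨0, by omega⟩
  refine ⟨?_, ⟨{Af (fun _ => true), (Af (fun _ => true))ᶜ},
      Phi_domatic (fun _ => true) i0, Phi_ncard (fun _ => true) i0⟩,
      fun P hP => ncard_le_two i0 P hP⟩
  unfold dp
  set S : Set (Set (Set (Fin n ⊕ Fin n))) :=
    {P | IsDomaticPartition (coronaK1 (SimpleGraph.pathGraph n)) P ∧ P.ncard = 2} with hS
  set σ := {f : Fin n → Bool // f i0 = true} with hσ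
  let Ψ : σ → ↥S := fun f =>
    ⟨{Af f.1, (Af f.1)ᶜ}, Phi_domatic f.1 i0, Phi_ncard f.1 i0⟩
  have hbij : Function.Bijective Ψ := by
    constructor
    · rintro ⟨f, hf⟩ ⟨g, hg⟩ h
      have h' : ({Af f, (Af f)ᶜ} : Set (Set (Fin n ⊕ Fin n))) = {Af g, (Af g)ᶜ} :=
        congrArg Subtype.val h
      have hmem : Af f = Af g ∨ Af f = (Af g)ᶜ := by
        have : Af f ∈ ({Af g, (Af g)ᶜ} : Set (Set (Fin n ⊕ Fin n))) := by
          rw [← h']; exact Or.inl rfl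
        simpa using this
      have hAfg : Af f = Af g := by
        rcases hmem with h1 | h1
        · exact h1
        · exfalso
          have h2 : Sum.inl i0 ∈ Af f := hf
          rw [h1] at h2
          exact h2 hg
      refine Subtype.ext (funext fun i => ?_)
      have := Set.ext_iff.mp hAfg (Sum.inl i)
      rw [mem_Af_inl, mem_Af_inl] at this
      cases hfi : f i <;> cases hgi : g i <;> simp_all
    · rintro ⟨P, hP, h2⟩
      obtain ⟨f, hf, heq⟩ := domatic_two_eq i0 P hP h2
      exact ⟨⟨f, hf⟩, Subtype.ext heq.symm⟩
  have e : σ ≃ ({i : Fin n // i ≠ i0} → Bool) :=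
    { toFun := fun f j => f.1 j.1
      invFun := fun g => ⟨fun i => if h : i = i0 then true else g ⟨i, h⟩, by simp⟩
      left_inv := fun f => Subtype.ext (funext fun i => by
        by_cases h : i = i0
        · subst h; simp [f.2]
        · simp [h])
      right_inv := fun g => funext fun j => by
        have := j.2
        simp [this] }
  have hcard : Nat.card σ = 2 ^ (n - 1) := by
    rw [Nat.card_eq_fintype_card, Fintype.card_congr e, Fintype.card_fun,
      Fintype.card_bool]
    congr 1
    rw [Fintype.card_subtype_compl, Fintype.card_subtype_eq, Fintype.card_fin]
  rw [← Nat.card_coe_set_eq, ← Nat.card_eq_of_bijective Ψ hbij, hcard]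
end

section
/- For every integer n ≥ 2, the number of domatic partitions with 2 parts of the corona of the path with a single pendant vertex satisfies dp(P_n ∘ K_1, 2) = 2·dp(P_{n-1} ∘ K_1, 2), with dp(P_2 ∘ K_1, 2) = 2. -/
section Aux

variable {α : Type*}

lemma corona_adj_inl_inr_s12 (G : SimpleGraph α) (u v : α) :
    (coronaK1 G).Adj (Sum.inl u) (Sum.inr v) ↔ u = v := Iff.rfl

lemma corona_adj_inr_inl_s12 (G : SimpleGraph α) (u v : α) :
    (coronaK1 G).Adj (Sum.inr u) (Sum.inl v) ↔ u = v := Iff.rfl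

lemma corona_adj_inr_inr (G : SimpleGraph α) (u v : α) :
    ¬ (coronaK1 G).Adj (Sum.inr u) (Sum.inr v) := fun h => h

/-- The key condition on one part of a 2-part domatic partition of a corona. -/
def Cond (S : Set (α ⊕ α)) : Prop := ∀ i : α, (Sum.inl i ∈ S ↔ Sum.inr i ∉ S)

lemma dom_iff (G : SimpleGraph α) (S : Set (α ⊕ α)) :
    (IsDominating (coronaK1 G) S ∧ IsDominating (coronaK1 G) Sᶜ) ↔ Cond S := by
  constructor
  · rintro ⟨h1, h2⟩ i
    constructor
    · intro hl hr
      have hr' : Sum.inr i ∉ Sᶜ := fun h => h hr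
      obtain ⟨u, hu, hadj⟩ := h2 _ hr'
      rcases u with v | v
      · rw [corona_adj_inr_inl_s12] at hadj
        subst hadj; exact hu hl
      · exact corona_adj_inr_inr G _ _ hadj
    · intro hr
      obtain ⟨u, hu, hadj⟩ := h1 _ hr
      rcases u with v | v
      · rw [corona_adj_inr_inl_s12] at hadj
        subst hadj; exact hu
      · exact (corona_adj_inr_inr G _ _ hadj).elim
  · intro h
    constructor
    · rintro (i | i) hv
      · exact ⟨Sum.inr i, not_not.mp (fun hn => hv ((h i).mpr hn)), rfl⟩
      · exact ⟨Sum.inl i, (h i).mpr hv, rfl⟩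
    · rintro (i | i) hv
      · have : Sum.inl i ∈ S := not_not.mp (fun hn => hv hn)
        exact ⟨Sum.inr i, (h i).mp this, rfl⟩
      · have : Sum.inr i ∈ S := not_not.mp (fun hn => hv hn)
        exact ⟨Sum.inl i, fun hl => (h i).mp hl this, rfl⟩

lemma part_iff [Nonempty α] (G : SimpleGraph α) (P : Set (Set (α ⊕ α))) :
    (IsDomaticPartition (coronaK1 G) P ∧ P.ncard = 2) ↔ ∃ S, Cond S ∧ P = {S, Sᶜ} := by
  constructor
  · rintro ⟨⟨⟨hne, huniq⟩, hdom⟩, hcard⟩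
    obtain ⟨S, T, hST, rfl⟩ := Set.ncard_eq_two.mp hcard
    have hTc : T = Sᶜ := by
      ext v
      constructor
      · intro hvT hvS
        obtain ⟨b, _, hb⟩ := huniq v
        have h1 : S = b := hb S ⟨Or.inl rfl, hvS⟩
        have h2 : T = b := hb T ⟨Or.inr rfl, hvT⟩
        exact hST (h1.trans h2.symm)
      · intro hvS
        obtain ⟨b, ⟨hbP, hvb⟩, _⟩ := huniq v
        rcases hbP with rfl | rfl
        · exact (hvS hvb).elim
        · exact hvb
    subst hTc
    refine ⟨S, ?_, rfl⟩
    exact (dom_iff G S).mp ⟨hdom S (Or.inl rfl), hdom Sᶜ (Or.inr rfl)⟩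
  · rintro ⟨S, hc, rfl⟩
    obtain ⟨a⟩ := ‹Nonempty α›
    have hSne : S.Nonempty := by
      by_cases h : Sum.inl a ∈ S
      · exact ⟨_, h⟩
      · exact ⟨Sum.inr a, not_not.mp (fun hn => h ((hc a).mpr hn))⟩
    have hScne : Sᶜ.Nonempty := by
      by_cases h : Sum.inl a ∈ S
      · exact ⟨Sum.inr a, (hc a).mp h⟩
      · exact ⟨Sum.inl a, h⟩
    have hne : S ≠ Sᶜ := by
      intro h
      obtain ⟨x, hx⟩ := hSne
      exact (h ▸ hx : x ∈ Sᶜ) hx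
    refine ⟨⟨⟨?_, ?_⟩, ?_⟩, Set.ncard_pair hne⟩
    · rintro (h | h)
      · exact hSne.ne_empty h.symm
      · exact hScne.ne_empty h.symm
    · intro v
      by_cases hv : v ∈ S
      · refine ⟨S, ⟨Or.inl rfl, hv⟩, ?_⟩
        rintro b ⟨(rfl | rfl), hb⟩
        · rfl
        · exact (hb hv).elim
      · refine ⟨Sᶜ, ⟨Or.inr rfl, hv⟩, ?_⟩
        rintro b ⟨(rfl | rfl), hb⟩
        · exact (hv hb).elim
        · rfl
    · have := (dom_iff G S).mpr hc
      rintro T (rfl | rfl)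
      · exact this.1
      · exact this.2

/-- encode a subset of base vertices as a part of the corona partition -/
def fset (A : Set α) : Set (α ⊕ α) := {x | Sum.elim (· ∈ A) (· ∉ A) x}

lemma mem_fset_inl (A : Set α) (i : α) : Sum.inl i ∈ fset A ↔ i ∈ A := Iff.rfl
lemma mem_fset_inr (A : Set α) (i : α) : Sum.inr i ∈ fset A ↔ i ∉ A := Iff.rfl

lemma cond_fset (A : Set α) : Cond (fset A) := fun i => by
  rw [mem_fset_inl, mem_fset_inr]; tauto

lemma fset_compl (A : Set α) : (fset A)ᶜ = fset Aᶜ := by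
  ext (i | i) <;> simp [fset]

lemma fset_inj {A B : Set α} (h : fset A = fset B) : A = B := by
  ext i
  constructor <;> intro hi
  · exact (mem_fset_inl B i).mp (h ▸ ((mem_fset_inl A i).mpr hi))
  · exact (mem_fset_inl A i).mp (h ▸ ((mem_fset_inl B i).mpr hi))

lemma fset_of_cond {S : Set (α ⊕ α)} (hc : Cond S) : fset {i | Sum.inl i ∈ S} = S := by
  ext (i | i)
  · exact Iff.rfl
  · rw [mem_fset_inr]
    simp only [Set.mem_setOf_eq]
    have := hc i
    tauto

end Aux

/-- The equivalence used to count subsets containing `0`. -/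
def subEquiv (n : ℕ) [NeZero n] :
    {A : Set (Fin n) // (0 : Fin n) ∈ A} ≃ ({i : Fin n // i ≠ 0} → Prop) where
  toFun A j := j.1 ∈ A.1
  invFun B := ⟨{i | i = 0 ∨ ∃ h : i ≠ 0, B ⟨i, h⟩}, Or.inl rfl⟩
  left_inv A := by
    ext i
    simp only [Set.mem_setOf_eq]
    constructor
    · rintro (rfl | ⟨h, hB⟩)
      · exact A.2
      · exact hB
    · intro hi
      by_cases h : i = 0
      · exact Or.inl h
      · exact Or.inr ⟨h, hi⟩
  right_inv B := by
    funext j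
    simp only [Set.mem_setOf_eq]
    refine propext ⟨?_, ?_⟩
    · rintro (h | ⟨h, hB⟩)
      · exact (j.2 h).elim
      · convert hB
    · intro h
      exact Or.inr ⟨j.2, h⟩

lemma dp_corona (n : ℕ) (hn : 1 ≤ n) (G : SimpleGraph (Fin n)) :
    dp (coronaK1 G) 2 = 2 ^ (n - 1) := by
  haveI : NeZero n := ⟨by omega⟩
  have hset : {P : Set (Set (Fin n ⊕ Fin n)) | IsDomaticPartition (coronaK1 G) P ∧ P.ncard = 2}
      = (fun A : Set (Fin n) => ({fset A, (fset A)ᶜ} : Set (Set (Fin n ⊕ Fin n)))) ''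
        {A : Set (Fin n) | (0 : Fin n) ∈ A} := by
    ext P
    simp only [Set.mem_setOf_eq, Set.mem_image]
    rw [part_iff]
    constructor
    · rintro ⟨S, hc, rfl⟩
      by_cases h0 : (0 : Fin n) ∈ {i | Sum.inl i ∈ S}
      · exact ⟨_, h0, by rw [fset_of_cond hc]⟩
      · refine ⟨{i | Sum.inl i ∈ S}ᶜ, h0, ?_⟩
        rw [fset_compl, compl_compl, fset_of_cond hc, ← fset_of_cond hc, fset_compl,
          fset_of_cond hc]
        exact Set.pair_comm _ _
    · rintro ⟨A, _, rfl⟩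
      exact ⟨fset A, cond_fset A, rfl⟩
  have hinj : Set.InjOn (fun A : Set (Fin n) => ({fset A, (fset A)ᶜ} : Set (Set (Fin n ⊕ Fin n))))
      {A : Set (Fin n) | (0 : Fin n) ∈ A} := by
    intro A hA B hB h
    simp only [Set.pair_eq_pair_iff] at h
    rcases h with ⟨h1, _⟩ | ⟨h1, _⟩
    · exact fset_inj h1
    · rw [fset_compl] at h1
      have := fset_inj h1
      subst this
      exact (hA hB).elim
  rw [dp, hset, Set.ncard_image_of_injOn hinj, ← Nat.card_coe_set_eq,
    show (Nat.card ↑{A : Set (Fin n) | (0 : Fin n) ∈ A})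
      = Nat.card {A : Set (Fin n) // (0 : Fin n) ∈ A} from rfl,
    Nat.card_congr (subEquiv n), Nat.card_fun, Nat.card_eq_fintype_card,
    Nat.card_eq_fintype_card]
  have h1 : Fintype.card Prop = 2 := rfl
  have h2 : Fintype.card {i : Fin n // i ≠ 0} = n - 1 := by
    simp [Fintype.card_subtype_compl, Fintype.card_subtype_eq]
  rw [h1, h2]

/-- For every `n ≥ 2`, `dp(P_n ∘ K₁, 2) = 2 · dp(P_{n-1} ∘ K₁, 2)`, with
`dp(P_2 ∘ K₁, 2) = 2`. -/
theorem dp_corona_path_recurrence :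
    dp (coronaK1 (SimpleGraph.pathGraph 2)) 2 = 2 ∧
      ∀ n : ℕ, 2 ≤ n →
        dp (coronaK1 (SimpleGraph.pathGraph n)) 2 =
          2 * dp (coronaK1 (SimpleGraph.pathGraph (n - 1))) 2 := by
  constructor
  · rw [dp_corona 2 (by norm_num)]
    norm_num
  · intro n hn
    rw [dp_corona n (by omega), dp_corona (n - 1) (by omega)]
    obtain ⟨m, rfl⟩ : ∃ m, n = m + 2 := ⟨n - 2, by omega⟩
    simp [pow_succ]
    ring
end

section
/- Let T be a finite tree with at least 4 vertices, let y be a quasi-star vertex of T with ones(y) the set of leaves adjacent to y, and let T₁ be the subgraph induced on V \ ones(y) and T₂ the subgraph induced on V \ (ones(y) ∪ {y}). If c is a weak 2-coloring of T in which y and its unique non-leaf neighbor w receive different colors, then the restriction of c to V \ ones(y) is a weak 2-coloring of T₁; and if y and w receive the same color, then the restriction of c to V \ (ones(y) ∪ {y}) is a weak 2-coloring of T₂. -/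
/-- A weak 2-coloring of `G`: every non-isolated vertex has a neighbor of a
different color. -/
def IsWeak2Coloring {V : Type*} (G : SimpleGraph V) (c : V → Fin 2) : Prop :=
  ∀ v, (∃ u, G.Adj v u) → ∃ u, G.Adj v u ∧ c u ≠ c v

/-- Let `T` be a tree on at least 4 vertices, `y` a quasi-star vertex with
unique non-leaf neighbor `w`, and `c` a weak 2-coloring of `T`. If `c y ≠ c w`,
the restriction of `c` to `V \ ones(y)` is a weak 2-coloring of the induced
subgraph `T₁`; if `c y = c w`, the restriction of `c` to `V \ (ones(y) ∪ {y})`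
is a weak 2-coloring of the induced subgraph `T₂`. -/
theorem weak2Coloring_restrict_quasi_star
    {V : Type*} [Fintype V] (G : SimpleGraph V) [DecidableRel G.Adj]
    (hT : G.IsTree) (hn : 4 ≤ Fintype.card V) (y w : V)
    (hw : G.Adj y w ∧ G.degree w ≠ 1)
    (hwUnique : ∀ z, G.Adj y z → G.degree z ≠ 1 → z = w)
    (hleaf : ∃ u, G.Adj y u ∧ G.degree u = 1)
    (c : V → Fin 2) (hc : IsWeak2Coloring G c) :
    (c y ≠ c w →
      IsWeak2Coloring (G.induce {v | ¬ (G.Adj y v ∧ G.degree v = 1)})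
        (fun v => c v)) ∧
    (c y = c w →
      IsWeak2Coloring (G.induce {v | ¬ (G.Adj y v ∧ G.degree v = 1) ∧ v ≠ y})
        (fun v => c v)) := by
  obtain ⟨hadj, hwdeg⟩ := hw
  have key : ∀ u v : V, G.Adj y u → G.degree u = 1 → G.Adj v u → v = y := by
    intro u v hyu hdu hvu
    have h1 : v ∈ G.neighborFinset u := (SimpleGraph.mem_neighborFinset _ _ _).2 hvu.symm
    have h2 : y ∈ G.neighborFinset u := (SimpleGraph.mem_neighborFinset _ _ _).2 hyu.symm
    have hcard : (G.neighborFinset u).card ≤ 1 := le_of_eq hdu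
    exact Finset.card_le_one.mp hcard _ h1 _ h2
  constructor
  · intro hne v hex
    by_cases hvy : (v : V) = y
    · refine ⟨⟨w, fun h => hwdeg h.2⟩, ?_, ?_⟩
      · show G.Adj (v : V) w
        rw [hvy]; exact hadj
      · show c w ≠ c (v : V)
        rw [hvy]; exact fun h => hne h.symm
    · obtain ⟨u0, hu0⟩ := hex
      have hne' : ∃ u, G.Adj (v : V) u := ⟨u0, hu0⟩
      obtain ⟨u, hvu, hcu⟩ := hc v hne'
      refine ⟨⟨u, fun h => hvy (key u v h.1 h.2 hvu)⟩, hvu, hcu⟩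
  · intro heq v hex
    obtain ⟨u0, hu0⟩ := hex
    obtain ⟨u, hvu, hcu⟩ := hc v ⟨u0, hu0⟩
    have huy : u ≠ y := by
      intro h
      subst h
      have hvdeg : G.degree (v : V) ≠ 1 := fun hd => v.2.1 ⟨hvu.symm, hd⟩
      have hvw : (v : V) = w := hwUnique v hvu.symm hvdeg
      exact hcu (by rw [hvw, ← heq])
    refine ⟨⟨u, ⟨fun h => v.2.2 (key u v h.1 h.2 hvu), huy⟩⟩, hvu, hcu⟩
end

section
/- Let T be a finite tree of order n ≥ 4 with a quasi-star vertex y, let ones(y) be the set of leaves adjacent to y, and let T₁ and T₂ be the subgraphs induced on V \ ones(y) and V \ (ones(y) ∪ {y}) respectively. Then every domatic partition of T₁ with 2 parts extends to a domatic partition of T with 2 parts, and every domatic partition of T₂ with 2 parts extends to a domatic partition of T with 2 parts; in particular dp(T,2) ≥ dp(T₁,2) and dp(T,2) ≥ dp(T₂,2). -/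
lemma pair_partition_aux {α : Type*} {P : Set (Set α)} (hpart : Setoid.IsPartition P)
    (h2 : P.ncard = 2) (a : α) :
    ∃ S₀ ∈ P, a ∉ S₀ ∧ ∀ S ∈ P, a ∉ S → S = S₀ := by
  obtain ⟨u, v, huv, rfl⟩ := Set.ncard_eq_two.mp h2
  obtain ⟨S, ⟨hSm, haS⟩, hu⟩ := hpart.2 a
  rcases hSm with rfl | rfl
  · refine ⟨v, Or.inr rfl, fun hav => huv (hu v ⟨Or.inr rfl, hav⟩).symm, ?_⟩
    rintro S' (rfl | rfl) haS'
    · exact absurd haS haS'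
    · rfl
  · refine ⟨u, Or.inl rfl, fun hau => huv (hu u ⟨Or.inl rfl, hau⟩), ?_⟩
    rintro S' (rfl | rfl) haS'
    · rfl
    · exact absurd haS haS'

/-- Extension map for `T₁`: add `ones(y)` to the part not containing `y`. -/
def ext1 {V : Type*} [Fintype V] (G : SimpleGraph V) [DecidableRel G.Adj] (y : V)
    (S : Set {v | ¬ (G.Adj y v ∧ G.degree v = 1)}) : Set V :=
  Subtype.val '' S ∪ {x | (G.Adj y x ∧ G.degree x = 1) ∧ y ∉ Subtype.val '' S}

/-- Extension map for `T₂`: add `{y}` to the part containing `w` and `ones(y)`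
to the other part. -/
def ext2 {V : Type*} [Fintype V] (G : SimpleGraph V) [DecidableRel G.Adj] (y w : V)
    (S : Set {v | ¬ (G.Adj y v ∧ G.degree v = 1) ∧ v ≠ y}) : Set V :=
  Subtype.val '' S ∪ {x | (G.Adj y x ∧ G.degree x = 1) ∧ w ∉ Subtype.val '' S}
    ∪ {x | x = y ∧ w ∈ Subtype.val '' S}

section

variable {V : Type*} [Fintype V] (G : SimpleGraph V) [DecidableRel G.Adj] (y : V)

lemma hy_mem : y ∈ {v | ¬ (G.Adj y v ∧ G.degree v = 1)} := fun h => G.irrefl h.1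

lemma ext1_val_mem (S : Set {v | ¬ (G.Adj y v ∧ G.degree v = 1)})
    (a : {v | ¬ (G.Adj y v ∧ G.degree v = 1)}) : a.val ∈ ext1 G y S ↔ a ∈ S := by
  constructor
  · rintro (⟨b, hb, hba⟩ | ⟨hpa, -⟩)
    · exact (Subtype.val_injective hba) ▸ hb
    · exact absurd hpa a.2
  · intro h; exact Or.inl ⟨a, h, rfl⟩

lemma ext1_inj : Function.Injective (ext1 G y) := by
  intro S S' h
  ext a
  rw [← ext1_val_mem G y S a, h, ext1_val_mem]

lemma ext1_main (P : Set (Set {v | ¬ (G.Adj y v ∧ G.degree v = 1)}))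
    (hP : IsDomaticPartition (G.induce {v | ¬ (G.Adj y v ∧ G.degree v = 1)}) P)
    (h2 : P.ncard = 2) :
    IsDomaticPartition G (ext1 G y '' P) := by
  constructor
  · constructor
    · rintro ⟨S, hS, hSe⟩
      obtain ⟨a, ha⟩ := Set.nonempty_iff_ne_empty.mpr (fun h => hP.1.1 (h ▸ hS))
      exact (hSe ▸ (ext1_val_mem G y S a).mpr ha : a.val ∈ (∅ : Set V))
    · intro x
      by_cases hx : G.Adj y x ∧ G.degree x = 1
      · obtain ⟨S₀, hS₀, hyS₀, huniq⟩ := pair_partition_aux hP.1 h2 ⟨y, hy_mem G y⟩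
        have hyval : y ∉ Subtype.val '' S₀ := by
          rintro ⟨b, hb, hby⟩
          exact hyS₀ ((Subtype.ext hby : b = ⟨y, hy_mem G y⟩) ▸ hb)
        refine ⟨ext1 G y S₀, ⟨⟨S₀, hS₀, rfl⟩, Or.inr ⟨hx, hyval⟩⟩, ?_⟩
        rintro B ⟨⟨S', hS', rfl⟩, hxB⟩
        rcases hxB with ⟨b, -, hbx⟩ | ⟨-, hyv'⟩
        · exact absurd (hbx ▸ b.2) (not_not_intro hx)
        · refine congrArg _ (huniq S' hS' ?_)
          exact fun h => hyv' ⟨⟨y, hy_mem G y⟩, h, rfl⟩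
      · obtain ⟨S, ⟨hS, hxS⟩, hu⟩ := hP.1.2 ⟨x, hx⟩
        refine ⟨ext1 G y S, ⟨⟨S, hS, rfl⟩, (ext1_val_mem G y S ⟨x, hx⟩).mpr hxS⟩, ?_⟩
        rintro B ⟨⟨S', hS', rfl⟩, hxB⟩
        exact congrArg _ (hu S' ⟨hS', (ext1_val_mem G y S' ⟨x, hx⟩).mp hxB⟩)
  · rintro B ⟨S, hS, rfl⟩
    intro x hx
    by_cases hpx : G.Adj y x ∧ G.degree x = 1
    · have hyv : y ∈ Subtype.val '' S := by
        by_contra h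
        exact hx (Or.inr ⟨hpx, h⟩)
      exact ⟨y, Or.inl hyv, hpx.1.symm⟩
    · have hxS : (⟨x, hpx⟩ : {v | ¬ (G.Adj y v ∧ G.degree v = 1)}) ∉ S :=
        fun h => hx ((ext1_val_mem G y S ⟨x, hpx⟩).mpr h)
      obtain ⟨u, huS, hadj⟩ := hP.2 S hS ⟨x, hpx⟩ hxS
      exact ⟨u.val, Or.inl ⟨u, huS, rfl⟩, hadj⟩

variable {w : V}

lemma ext2_val_mem (hw : w ∈ {v | ¬ (G.Adj y v ∧ G.degree v = 1) ∧ v ≠ y})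
    (S : Set {v | ¬ (G.Adj y v ∧ G.degree v = 1) ∧ v ≠ y})
    (a : {v | ¬ (G.Adj y v ∧ G.degree v = 1) ∧ v ≠ y}) :
    a.val ∈ ext2 G y w S ↔ a ∈ S := by
  constructor
  · rintro ((⟨b, hb, hba⟩ | ⟨hpa, -⟩) | ⟨hay, -⟩)
    · exact (Subtype.val_injective hba) ▸ hb
    · exact absurd hpa a.2.1
    · exact absurd hay a.2.2
  · intro h; exact Or.inl (Or.inl ⟨a, h, rfl⟩)

lemma ext2_inj (hw : w ∈ {v | ¬ (G.Adj y v ∧ G.degree v = 1) ∧ v ≠ y}) :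
    Function.Injective (ext2 G y w) := by
  intro S S' h
  ext a
  rw [← ext2_val_mem G y hw S a, h, ext2_val_mem G y hw]

lemma ext2_main (hw : w ∈ {v | ¬ (G.Adj y v ∧ G.degree v = 1) ∧ v ≠ y})
    {z : V} (hz : G.Adj y z ∧ G.degree z = 1)
    (P : Set (Set {v | ¬ (G.Adj y v ∧ G.degree v = 1) ∧ v ≠ y}))
    (hP : IsDomaticPartition (G.induce {v | ¬ (G.Adj y v ∧ G.degree v = 1) ∧ v ≠ y}) P)
    (h2 : P.ncard = 2) :
    IsDomaticPartition G (ext2 G y w '' P) := by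
  have hwval : ∀ S, w ∈ Subtype.val '' S ↔ (⟨w, hw⟩ : {v | ¬ (G.Adj y v ∧ G.degree v = 1) ∧ v ≠ y}) ∈ S := by
    intro S
    constructor
    · rintro ⟨b, hb, hbw⟩
      exact (Subtype.ext hbw : b = ⟨w, hw⟩) ▸ hb
    · intro h; exact ⟨⟨w, hw⟩, h, rfl⟩
  constructor
  · constructor
    · rintro ⟨S, hS, hSe⟩
      obtain ⟨a, ha⟩ := Set.nonempty_iff_ne_empty.mpr (fun h => hP.1.1 (h ▸ hS))
      exact (hSe ▸ (ext2_val_mem G y hw S a).mpr ha : a.val ∈ (∅ : Set V))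
    · intro x
      by_cases hxy : x = y
      · obtain ⟨S, ⟨hS, hwS⟩, hu⟩ := hP.1.2 ⟨w, hw⟩
        refine ⟨ext2 G y w S, ⟨⟨S, hS, rfl⟩, Or.inr ⟨hxy, (hwval S).mpr hwS⟩⟩, ?_⟩
        rintro B ⟨⟨S', hS', rfl⟩, hxB⟩
        rcases hxB with (⟨b, -, hbx⟩ | ⟨hpx, -⟩) | ⟨-, hwv'⟩
        · exact absurd (hxy ▸ hbx : b.val = y) b.2.2
        · exact absurd (hxy ▸ hpx.1) (G.irrefl)
        · exact congrArg _ (hu S' ⟨hS', (hwval S').mp hwv'⟩)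
      · by_cases hpx : G.Adj y x ∧ G.degree x = 1
        · obtain ⟨S₀, hS₀, hwS₀, huniq⟩ := pair_partition_aux hP.1 h2 ⟨w, hw⟩
          refine ⟨ext2 G y w S₀, ⟨⟨S₀, hS₀, rfl⟩,
            Or.inl (Or.inr ⟨hpx, fun h => hwS₀ ((hwval S₀).mp h)⟩)⟩, ?_⟩
          rintro B ⟨⟨S', hS', rfl⟩, hxB⟩
          rcases hxB with (⟨b, -, hbx⟩ | ⟨-, hwv'⟩) | ⟨hxy', -⟩
          · exact absurd (hbx ▸ b.2.1) (not_not_intro hpx)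
          · exact congrArg _ (huniq S' hS' (fun h => hwv' ((hwval S').mpr h)))
          · exact absurd hxy' hxy
        · obtain ⟨S, ⟨hS, hxS⟩, hu⟩ := hP.1.2 ⟨x, hpx, hxy⟩
          refine ⟨ext2 G y w S, ⟨⟨S, hS, rfl⟩,
            (ext2_val_mem G y hw S ⟨x, hpx, hxy⟩).mpr hxS⟩, ?_⟩
          rintro B ⟨⟨S', hS', rfl⟩, hxB⟩
          exact congrArg _ (hu S' ⟨hS', (ext2_val_mem G y hw S' ⟨x, hpx, hxy⟩).mp hxB⟩)
  · rintro B ⟨S, hS, rfl⟩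
    intro x hx
    by_cases hpx : G.Adj y x ∧ G.degree x = 1
    · have hwv : w ∈ Subtype.val '' S := by
        by_contra h
        exact hx (Or.inl (Or.inr ⟨hpx, h⟩))
      exact ⟨y, Or.inr ⟨rfl, hwv⟩, hpx.1.symm⟩
    · by_cases hxy : x = y
      · have hwv : w ∉ Subtype.val '' S := by
          intro h
          exact hx (Or.inr ⟨hxy, h⟩)
        exact ⟨z, Or.inl (Or.inr ⟨hz, hwv⟩), hxy.symm ▸ hz.1⟩
      · have hxS : (⟨x, hpx, hxy⟩ : {v | ¬ (G.Adj y v ∧ G.degree v = 1) ∧ v ≠ y}) ∉ S :=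
          fun h => hx ((ext2_val_mem G y hw S ⟨x, hpx, hxy⟩).mpr h)
        obtain ⟨u, huS, hadj⟩ := hP.2 S hS ⟨x, hpx, hxy⟩ hxS
        exact ⟨u.val, Or.inl (Or.inl ⟨u, huS, rfl⟩), hadj⟩

end

/-- Let `T` be a tree of order at least 4 with quasi-star vertex `y` (adjacent
to exactly one non-leaf and to at least one leaf), `T₁` the subgraph induced on
`V \ ones(y)` and `T₂` the one induced on `V \ (ones(y) ∪ {y})`. Every 2-part
domatic partition of `T₁` (resp. `T₂`) extends to a 2-part domatic partition of
`T`; in particular `dp T 2 ≥ dp T₁ 2` and `dp T 2 ≥ dp T₂ 2`. -/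
theorem domatic_partition_extends_quasi_star
    {V : Type*} [Fintype V] (G : SimpleGraph V) [DecidableRel G.Adj]
    (hT : G.IsTree) (hn : 4 ≤ Fintype.card V) (y : V)
    (hquasi₁ : ∃! w, G.Adj y w ∧ G.degree w ≠ 1)
    (hquasi₂ : ∃ u, G.Adj y u ∧ G.degree u = 1) :
    (∀ P : Set (Set {v | ¬ (G.Adj y v ∧ G.degree v = 1)}),
      IsDomaticPartition (G.induce {v | ¬ (G.Adj y v ∧ G.degree v = 1)}) P →
        P.ncard = 2 →
        ∃ Q : Set (Set V), IsDomaticPartition G Q ∧ Q.ncard = 2 ∧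
          ∀ A ∈ P, ∃ B ∈ Q, Subtype.val '' A ⊆ B) ∧
    (∀ P : Set (Set {v | ¬ (G.Adj y v ∧ G.degree v = 1) ∧ v ≠ y}),
      IsDomaticPartition (G.induce {v | ¬ (G.Adj y v ∧ G.degree v = 1) ∧ v ≠ y}) P →
        P.ncard = 2 →
        ∃ Q : Set (Set V), IsDomaticPartition G Q ∧ Q.ncard = 2 ∧
          ∀ A ∈ P, ∃ B ∈ Q, Subtype.val '' A ⊆ B) ∧
    dp (G.induce {v | ¬ (G.Adj y v ∧ G.degree v = 1)}) 2 ≤ dp G 2 ∧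
    dp (G.induce {v | ¬ (G.Adj y v ∧ G.degree v = 1) ∧ v ≠ y}) 2 ≤ dp G 2 := by
  classical
  obtain ⟨w, ⟨hwadj, hwdeg⟩, -⟩ := hquasi₁
  obtain ⟨z, hzadj, hzdeg⟩ := hquasi₂
  have hw : w ∈ {v | ¬ (G.Adj y v ∧ G.degree v = 1) ∧ v ≠ y} :=
    ⟨fun h => hwdeg h.2, fun h => G.irrefl (h ▸ hwadj)⟩
  refine ⟨?_, ?_, ?_, ?_⟩
  · intro P hP h2
    refine ⟨ext1 G y '' P, ext1_main G y P hP h2, ?_, ?_⟩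
    · rw [Set.ncard_image_of_injective P (ext1_inj G y), h2]
    · intro A hA
      exact ⟨ext1 G y A, Set.mem_image_of_mem _ hA, Set.subset_union_left⟩
  · intro P hP h2
    refine ⟨ext2 G y w '' P, ext2_main G y hw ⟨hzadj, hzdeg⟩ P hP h2, ?_, ?_⟩
    · rw [Set.ncard_image_of_injective P (ext2_inj G y hw), h2]
    · intro A hA
      exact ⟨ext2 G y w A, Set.mem_image_of_mem _ hA,
        (Set.subset_union_left).trans Set.subset_union_left⟩
  · apply Set.ncard_le_ncard_of_injOn (fun P => ext1 G y '' P)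
    · rintro P ⟨hP, h2⟩
      exact ⟨ext1_main G y P hP h2,
        by rw [Set.ncard_image_of_injective P (ext1_inj G y), h2]⟩
    · exact fun a _ b _ h => Set.image_injective.mpr (ext1_inj G y) h
  · apply Set.ncard_le_ncard_of_injOn (fun P => ext2 G y w '' P)
    · rintro P ⟨hP, h2⟩
      exact ⟨ext2_main G y hw ⟨hzadj, hzdeg⟩ P hP h2,
        by rw [Set.ncard_image_of_injective P (ext2_inj G y hw), h2]⟩
    · exact fun a _ b _ h => Set.image_injective.mpr (ext2_inj G y hw) h
end
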